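/- arXiv:1109.1571 — 3 statements merged into one kernel-verified Lean document; each statement's English description precedes it below -/
import Mathlib

section
/- Simplicial Alexander duality: for an abstract simplicial complex Δ on a finite vertex set V with |V| = n, and for every integer i, the i-th reduced simplicial homology of the Alexander dual Δ* (with coefficients in a field k) is isomorphic to the (n − 3 − i)-th reduced simplicial cohomology of Δ with coefficients in k. -/
open Finset

/-- An abstract simplicial complex on the vertex set `V`: a collection of subsets
of `V` closed under taking subsets. -/
def IsSimplicialComplex {V : Type*} (Δ : Finset (Finset V)) : Prop :=
  ∀ σ ∈ Δ, ∀ τ ⊆ σ, τ ∈ Δ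

/-- The Alexander dual `Δ* = {σ ⊆ V : V \ σ ∉ Δ}`. -/
def alexDual {V : Type*} [Fintype V] [DecidableEq V] (Δ : Finset (Finset V)) :
    Finset (Finset V) :=
  Finset.univ.filter fun σ => σᶜ ∉ Δ

/-- The link of `σ` in `Δ`: `link_Δ(σ) = {τ ∈ Δ : τ ∪ σ ∈ Δ, τ ∩ σ = ∅}`. -/
def linkOf {V : Type*} [DecidableEq V] (Δ : Finset (Finset V)) (σ : Finset V) :
    Finset (Finset V) :=
  Δ.filter fun τ => τ ∪ σ ∈ Δ ∧ τ ∩ σ = ∅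

/-- The restriction `Δ|_σ = {τ ∈ Δ : τ ⊆ σ}`. -/
def restrict {V : Type*} [DecidableEq V] (Δ : Finset (Finset V)) (σ : Finset V) :
    Finset (Finset V) :=
  Δ.filter fun τ => τ ⊆ σ

/-- The simplicial boundary matrix of a graded family `F` of finite sets of faces:
the matrix of the map `F j → F (j-1)`, `e_τ ↦ ∑_{i ∈ τ} sign(i,τ) e_{τ \ {i}}`,
where `sign(i,τ) = (-1)^(s-1)` if `i` is the `s`-th smallest element of `τ`. -/
noncomputable def bMat (k : Type*) [Field k] {V : Type*} [LinearOrder V] [Fintype V]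
    (F : ℤ → Finset (Finset V)) (j : ℤ) : Matrix (F (j - 1)) (F j) k :=
  Matrix.of fun τ' τ =>
    ∑ i ∈ τ.1, if τ.1.erase i = τ'.1
      then (-1 : k) ^ (τ.1.filter fun a => a < i).card else 0

/-- Dimension of the `j`-th homology of the chain complex with chain spaces spanned
by `F j` and the boundary maps `bMat`: `dim ker ∂_j − dim im ∂_(j+1)`. -/
noncomputable def homDimAt (k : Type*) [Field k] {V : Type*} [LinearOrder V] [Fintype V]
    (F : ℤ → Finset (Finset V)) (j : ℤ) : ℕ :=
  ((F j).card - (bMat k F j).rank) - (bMat k F (j + 1)).rank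

/-- Dimension of the `j`-th cohomology of the dual (transposed) complex:
`dim ker δ^j − dim im δ^(j-1)` where `δ^j = (∂_(j+1))ᵀ`. -/
noncomputable def cohomDimAt (k : Type*) [Field k] {V : Type*} [LinearOrder V] [Fintype V]
    (F : ℤ → Finset (Finset V)) (j : ℤ) : ℕ :=
  ((F j).card - (bMat k F (j + 1)).transpose.rank) - (bMat k F j).transpose.rank

/-- The `j`-dimensional faces of a simplicial complex `Δ` (faces with `j+1` vertices);
the empty face sits in dimension `-1`, yielding *reduced* (co)homology below. -/
def cplxFaces {V : Type*} [LinearOrder V] [Fintype V] (Δ : Finset (Finset V)) (j : ℤ) :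
    Finset (Finset V) :=
  Δ.filter fun τ => (τ.card : ℤ) = j + 1

/-- `dim_k H̃_j(Δ; k)`, reduced simplicial homology with coefficients in `k`. -/
noncomputable def redHomDim (k : Type*) [Field k] {V : Type*} [LinearOrder V] [Fintype V]
    (Δ : Finset (Finset V)) (j : ℤ) : ℕ :=
  homDimAt k (cplxFaces Δ) j

/-- `dim_k H̃^j(Δ; k)`, reduced simplicial cohomology with coefficients in `k`. -/
noncomputable def redCohomDim (k : Type*) [Field k] {V : Type*} [LinearOrder V] [Fintype V]
    (Δ : Finset (Finset V)) (j : ℤ) : ℕ :=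
  cohomDimAt k (cplxFaces Δ) j

namespace AlexDualAux
open Matrix

variable (k : Type*) [Field k] {V : Type*} [LinearOrder V] [Fintype V]

/-- The boundary coefficient of `τ'` in `∂ τ`. -/
noncomputable def Ent (τ' τ : Finset V) : k :=
  ∑ i ∈ τ, if τ.erase i = τ' then (-1 : k) ^ (τ.filter fun a => a < i).card else 0

/-- Generic boundary matrix between two sets of faces. -/
noncomputable def gB (s t : Finset (Finset V)) : Matrix ↥s ↥t k :=
  Matrix.of fun τ' τ => Ent k τ'.1 τ.1

lemma bMat_eq_gB (F : ℤ → Finset (Finset V)) (j : ℤ) :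
    bMat k F j = gB k (F (j - 1)) (F j) := rfl

lemma gB_apply (s t : Finset (Finset V)) (τ' : ↥s) (τ : ↥t) :
    gB k s t τ' τ = Ent k τ'.1 τ.1 := rfl

/-- summand in `(∂∘∂)`: coefficient path `τ → τ.erase i → τ''`. -/
noncomputable def TT (τ'' τ : Finset V) (i x : V) : k :=
  (if (τ.erase i).erase x = τ'' then
      (-1 : k) ^ ((τ.erase i).filter fun a => a < x).card else 0) *
    ((-1 : k) ^ (τ.filter fun a => a < i).card)

lemma TT_anti_lt {τ'' τ : Finset V} {i x : V} (hx : x ∈ τ) (hlt : x < i) :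
    TT k τ'' τ i x = - TT k τ'' τ x i := by
  have hxe : x ∈ τ.filter fun a => a < i := mem_filter.2 ⟨hx, hlt⟩
  have hcard : ((τ.filter fun a => a < i).erase x).card + 1
      = (τ.filter fun a => a < i).card := card_erase_add_one hxe
  have h1 : ((τ.erase i).filter fun a => a < x) = τ.filter fun a => a < x := by
    rw [filter_erase, erase_eq_of_notMem]
    simp only [mem_filter, not_and]
    intro _ hi'; exact absurd (hi'.trans hlt) (lt_irrefl i)
  have h2 : ((τ.erase x).filter fun a => a < i) = (τ.filter fun a => a < i).erase x := by
    rw [filter_erase]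
  have h3 : (τ.erase x).erase i = (τ.erase i).erase x := Finset.erase_right_comm (a := x) (b := i)
  by_cases hE : (τ.erase i).erase x = τ''
  · rw [TT, TT, if_pos hE, if_pos (h3.trans hE), h1, h2, ← hcard, pow_succ]
    ring
  · rw [TT, TT, if_neg hE, if_neg (fun hc => hE (h3 ▸ hc))]
    ring

lemma TT_anti {τ'' τ : Finset V} {i x : V} (hi : i ∈ τ) (hx : x ∈ τ) (hne : i ≠ x) :
    TT k τ'' τ i x = - TT k τ'' τ x i := by
  rcases hne.lt_or_gt with hlt | hlt
  · have := TT_anti_lt k (τ'' := τ'') hi hlt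
    rw [this]; ring
  · exact TT_anti_lt k hx hlt

lemma gB_mul_gB (s t u : Finset (Finset V))
    (hmid : ∀ τ ∈ u, ∀ i ∈ τ, τ.erase i ∈ t) :
    gB k s t * gB k t u = 0 := by
  ext τ'' τ
  rw [Matrix.mul_apply]
  show (∑ τ' : ↥t, Ent k τ''.1 τ'.1 * Ent k τ'.1 τ.1) = (0 : Matrix ↥s ↥u k) τ'' τ
  have step : ∀ τ' : ↥t, Ent k τ''.1 τ'.1 * Ent k τ'.1 τ.1
      = ∑ i ∈ τ.1, if τ.1.erase i = τ'.1 then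
          Ent k τ''.1 τ'.1 * ((-1 : k) ^ (τ.1.filter fun a => a < i).card) else 0 := by
    intro τ'
    nth_rewrite 2 [Ent]
    rw [mul_sum]
    refine Finset.sum_congr rfl fun i _ => ?_
    split <;> simp
  rw [Finset.sum_congr rfl fun τ' _ => step τ', Finset.sum_comm]
  have inner : ∀ i ∈ τ.1, (∑ τ' : ↥t, if τ.1.erase i = τ'.1 then
      Ent k τ''.1 τ'.1 * ((-1 : k) ^ (τ.1.filter fun a => a < i).card) else 0)
      = ∑ x ∈ τ.1.erase i, TT k τ''.1 τ.1 i x := by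
    intro i hi
    rw [Finset.sum_coe_sort t (fun σ => if τ.1.erase i = σ then
      Ent k τ''.1 σ * ((-1 : k) ^ (τ.1.filter fun a => a < i).card) else 0),
      Finset.sum_ite_eq, if_pos (hmid τ.1 τ.2 i hi), Ent, Finset.sum_mul]
    rfl
  rw [Finset.sum_congr rfl inner, Finset.sum_sigma']
  have : ∀ (p : (_ : V) × V), p ∈ τ.1.sigma (fun i => τ.1.erase i) →
      (⟨p.2, p.1⟩ : (_ : V) × V) ∈ τ.1.sigma (fun i => τ.1.erase i) := by
    rintro ⟨i, x⟩ hp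
    rw [Finset.mem_sigma] at hp ⊢
    obtain ⟨hi, hx⟩ := hp
    exact ⟨(erase_subset _ _) hx, mem_erase.2 ⟨(ne_of_mem_erase hx).symm, hi⟩⟩
  show _ = (0 : k)
  refine Finset.sum_involution (fun p _ => ⟨p.2, p.1⟩) ?_ ?_ this (fun p _ => rfl)
  · rintro ⟨i, x⟩ hp
    rw [Finset.mem_sigma] at hp
    have hxτ : x ∈ (τ : Finset V) := (erase_subset _ _) hp.2
    have hne : i ≠ x := (ne_of_mem_erase hp.2).symm
    rw [TT_anti k hp.1 hxτ hne]
    ring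
  · rintro ⟨i, x⟩ hp _ hc
    rw [Finset.mem_sigma] at hp
    exact (ne_of_mem_erase hp.2) (congrArg Sigma.fst hc)


variable {k}

lemma mem_cplxFaces' {Δ : Finset (Finset V)} {j : ℤ} {τ : Finset V} :
    τ ∈ cplxFaces Δ j ↔ τ ∈ Δ ∧ (τ.card : ℤ) = j + 1 := by
  simp [cplxFaces]

/-- All subsets, graded. -/
def aF (V : Type*) [LinearOrder V] [Fintype V] (j : ℤ) : Finset (Finset V) :=
  cplxFaces (Finset.univ : Finset (Finset V)) j

/-- Nonfaces, graded. -/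
def nF (Δ : Finset (Finset V)) (j : ℤ) : Finset (Finset V) :=
  cplxFaces (Finset.univ \ Δ) j

lemma mem_aF {j : ℤ} {τ : Finset V} : τ ∈ aF V j ↔ (τ.card : ℤ) = j + 1 := by
  simp [aF, mem_cplxFaces']

lemma mem_nF {Δ : Finset (Finset V)} {j : ℤ} {τ : Finset V} :
    τ ∈ nF Δ j ↔ τ ∉ Δ ∧ (τ.card : ℤ) = j + 1 := by
  simp [nF, mem_cplxFaces']

lemma erase_mem_of_complex {Δ : Finset (Finset V)} (hΔ : IsSimplicialComplex Δ)
    {σ : Finset V} (hσ : σ ∈ Δ) (i : V) : σ.erase i ∈ Δ :=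
  hΔ σ hσ _ (erase_subset _ _)

lemma Ent_eq_zero_of_nonface {Δ : Finset (Finset V)} (hΔ : IsSimplicialComplex Δ)
    {τ' σ : Finset V} (hσ : σ ∈ Δ) (hτ' : τ' ∉ Δ) : Ent k τ' σ = 0 := by
  rw [Ent]
  refine Finset.sum_eq_zero fun i _ => ?_
  rw [if_neg fun hc => hτ' (by rw [← hc]; exact erase_mem_of_complex hΔ hσ i)]

section Homotopy

variable (v₀ : V) (hv : ∀ a : V, v₀ ≤ a)

/-- The cone homotopy matrix. -/
noncomputable def gH (s t : Finset (Finset V)) : Matrix ↥s ↥t k :=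
  Matrix.of fun r c => if v₀ ∉ c.1 ∧ r.1 = insert v₀ c.1 then 1 else 0

include hv

lemma filter_lt_v₀ (τ : Finset V) : (τ.filter fun a => a < v₀) = ∅ :=
  Finset.filter_false_of_mem fun a _ => not_lt.2 (hv a)

lemma Ent_erase_self {τ : Finset V} (hτ : v₀ ∈ τ) : Ent k (τ.erase v₀) τ = 1 := by
  rw [Ent, Finset.sum_eq_single_of_mem v₀ hτ]
  · rw [if_pos rfl, filter_lt_v₀ v₀ hv, Finset.card_empty, pow_zero]
  · intro b hb hb'
    rw [if_neg]
    intro hc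
    have h1 : v₀ ∈ τ.erase b := mem_erase.2 ⟨fun hh => hb' hh.symm, hτ⟩
    rw [hc] at h1
    exact (notMem_erase v₀ τ) h1

lemma Ent_erase_ne {τ τ' : Finset V} (hτ : v₀ ∈ τ) (hτ' : v₀ ∈ τ') (hne : τ' ≠ τ) :
    Ent k (τ'.erase v₀) τ = 0 := by
  rw [Ent]
  refine Finset.sum_eq_zero fun i hi => ?_
  rw [if_neg]
  intro hc
  by_cases hiv : i = v₀
  · subst hiv
    have heq : τ' = τ := by rw [← insert_erase hτ', ← hc, insert_erase hτ]
    exact hne heq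
  · have h1 : v₀ ∈ τ.erase i := mem_erase.2 ⟨fun hh => hiv hh.symm, hτ⟩
    rw [hc] at h1
    exact (notMem_erase v₀ τ') h1

omit hv in
lemma Ent_insert_rest {τ τ' : Finset V} (hv₀τ : v₀ ∉ τ) (hv' : v₀ ∉ τ') (i : V) (hi : i ∈ τ) :
    (if (insert v₀ τ).erase i = τ' then
      (-1 : k) ^ ((insert v₀ τ).filter fun a => a < i).card else 0) = 0 := by
  rw [if_neg]
  intro hc
  have hiv : v₀ ≠ i := fun hh => hv₀τ (hh ▸ hi)
  have : v₀ ∈ (insert v₀ τ).erase i := mem_erase.2 ⟨hiv, mem_insert_self _ _⟩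
  rw [hc] at this
  exact hv' this

lemma Ent_insert_rest' {τ τ' : Finset V} (hv₀τ : v₀ ∉ τ) (hv' : v₀ ∈ τ') (i : V) (hi : i ∈ τ) :
    (if (insert v₀ τ).erase i = τ' then
      (-1 : k) ^ ((insert v₀ τ).filter fun a => a < i).card else 0)
    = - (if τ.erase i = τ'.erase v₀ then (-1 : k) ^ (τ.filter fun a => a < i).card else 0) := by
  have hiv : v₀ ≠ i := fun hh => hv₀τ (hh ▸ hi)
  have hlt : v₀ < i := lt_of_le_of_ne (hv i) hiv
  have hcond : (insert v₀ τ).erase i = τ' ↔ τ.erase i = τ'.erase v₀ := by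
    constructor
    · intro hc
      rw [← hc, Finset.erase_right_comm, erase_insert hv₀τ]
    · intro hc
      rw [erase_insert_of_ne hiv, hc, insert_erase hv']
  have hfil : ((insert v₀ τ).filter fun a => a < i) = insert v₀ (τ.filter fun a => a < i) := by
    rw [Finset.filter_insert, if_pos hlt]
  have hcards : ((insert v₀ τ).filter fun a => a < i).card = (τ.filter fun a => a < i).card + 1 := by
    rw [hfil, card_insert_of_notMem fun hh => hv₀τ (Finset.filter_subset _ _ hh)]
  by_cases hc : τ.erase i = τ'.erase v₀
  · rw [if_pos (hcond.2 hc), if_pos hc, hcards, pow_succ]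
    ring
  · rw [if_neg (fun hh => hc (hcond.1 hh)), if_neg hc, neg_zero]

lemma htpy (a : ℤ) :
    gB k (aF V a) (aF V (a + 1)) * gH (k := k) v₀ (aF V (a + 1)) (aF V a)
      + gH (k := k) v₀ (aF V a) (aF V (a - 1)) * gB k (aF V (a - 1)) (aF V a)
      = (1 : Matrix ↥(aF V a) ↥(aF V a) k) := by
  ext τ' τ
  have hτc : ((τ : Finset V).card : ℤ) = a + 1 := mem_aF.1 τ.2
  have hτ'c : ((τ' : Finset V).card : ℤ) = a + 1 := mem_aF.1 τ'.2
  have hone : (1 : Matrix ↥(aF V a) ↥(aF V a) k) τ' τ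
      = if (τ' : Finset V) = (τ : Finset V) then 1 else 0 := by
    rw [Matrix.one_apply]
    exact if_congr Subtype.ext_iff rfl rfl
  -- Term 1
  have T1 : (gB k (aF V a) (aF V (a + 1)) * gH (k := k) v₀ (aF V (a + 1)) (aF V a)) τ' τ
      = if v₀ ∉ (τ : Finset V) then Ent k τ'.1 (insert v₀ τ.1) else 0 := by
    rw [Matrix.mul_apply]
    by_cases hv₀ : v₀ ∈ (τ : Finset V)
    · rw [if_neg (by simpa using hv₀)]
      refine Finset.sum_eq_zero fun σ _ => ?_
      show Ent k τ'.1 σ.1 * (if v₀ ∉ τ.1 ∧ σ.1 = insert v₀ τ.1 then (1:k) else 0) = 0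
      rw [if_neg (fun hc => hc.1 hv₀), mul_zero]
    · rw [if_pos hv₀]
      have hins : insert v₀ (τ : Finset V) ∈ aF V (a + 1) := by
        rw [mem_aF, card_insert_of_notMem hv₀]
        push_cast
        omega
      have hcongr : ∀ σ : ↥(aF V (a + 1)),
          gB k (aF V a) (aF V (a + 1)) τ' σ * gH (k := k) v₀ (aF V (a + 1)) (aF V a) σ τ
          = if insert v₀ τ.1 = σ.1 then Ent k τ'.1 σ.1 else 0 := by
        intro σ
        show Ent k τ'.1 σ.1 * (if v₀ ∉ τ.1 ∧ σ.1 = insert v₀ τ.1 then (1:k) else 0) = _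
        by_cases hc : σ.1 = insert v₀ τ.1
        · rw [if_pos ⟨hv₀, hc⟩, if_pos hc.symm, mul_one]
        · rw [if_neg (fun hh => hc hh.2), if_neg (fun hh => hc hh.symm), mul_zero]
      rw [Finset.sum_congr rfl fun σ _ => hcongr σ,
        Finset.sum_coe_sort (aF V (a + 1)) (fun σ => if insert v₀ τ.1 = σ then Ent k τ'.1 σ else 0),
        Finset.sum_ite_eq, if_pos hins]
  -- Term 2
  have T2 : (gH (k := k) v₀ (aF V a) (aF V (a - 1)) * gB k (aF V (a - 1)) (aF V a)) τ' τ
      = if v₀ ∈ (τ' : Finset V) then Ent k (τ'.1.erase v₀) τ.1 else 0 := by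
    rw [Matrix.mul_apply]
    by_cases hv' : v₀ ∈ (τ' : Finset V)
    · rw [if_pos hv']
      have hmem : (τ' : Finset V).erase v₀ ∈ aF V (a - 1) := by
        rw [mem_aF]
        have := card_erase_add_one hv'
        push_cast [← this] at hτ'c ⊢
        omega
      have hcongr : ∀ σ : ↥(aF V (a - 1)),
          gH (k := k) v₀ (aF V a) (aF V (a - 1)) τ' σ * gB k (aF V (a - 1)) (aF V a) σ τ
          = if τ'.1.erase v₀ = σ.1 then Ent k σ.1 τ.1 else 0 := by
        intro σ
        show (if v₀ ∉ σ.1 ∧ τ'.1 = insert v₀ σ.1 then (1:k) else 0) * Ent k σ.1 τ.1 = _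
        by_cases hc : τ'.1.erase v₀ = σ.1
        · have h1 : v₀ ∉ σ.1 := by rw [← hc]; exact notMem_erase _ _
          have h2 : τ'.1 = insert v₀ σ.1 := by rw [← hc, insert_erase hv']
          rw [if_pos hc, if_pos ⟨h1, h2⟩, one_mul]
        · rw [if_neg hc, if_neg, zero_mul]
          rintro ⟨h1, h2⟩
          exact hc (by rw [h2, erase_insert h1])
      rw [Finset.sum_congr rfl fun σ _ => hcongr σ,
        Finset.sum_coe_sort (aF V (a - 1)) (fun σ => if τ'.1.erase v₀ = σ then Ent k σ τ.1 else 0),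
        Finset.sum_ite_eq, if_pos hmem]
    · rw [if_neg hv']
      refine Finset.sum_eq_zero fun σ _ => ?_
      show (if v₀ ∉ σ.1 ∧ τ'.1 = insert v₀ σ.1 then (1:k) else 0) * Ent k σ.1 τ.1 = 0
      rw [if_neg, zero_mul]
      rintro ⟨_, h2⟩
      exact hv' (h2 ▸ mem_insert_self _ _)
  rw [Matrix.add_apply, T1, T2, hone]
  by_cases hv₀ : v₀ ∈ (τ : Finset V)
  · rw [if_neg (by simpa using hv₀)]
    by_cases hv' : v₀ ∈ (τ' : Finset V)
    · rw [if_pos hv']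
      by_cases heq : (τ' : Finset V) = (τ : Finset V)
      · rw [if_pos heq, heq, Ent_erase_self v₀ hv hv₀, zero_add]
      · rw [if_neg heq, Ent_erase_ne v₀ hv hv₀ hv' heq, zero_add]
    · rw [if_neg hv', if_neg (fun hh => hv' (by rw [hh]; exact hv₀)), zero_add]
  · rw [if_pos hv₀, Ent]
    rw [Finset.sum_insert hv₀, erase_insert hv₀, filter_lt_v₀ v₀ hv, Finset.card_empty, pow_zero]
    by_cases hv' : v₀ ∈ (τ' : Finset V)
    · rw [if_pos hv',
        Finset.sum_congr rfl (fun i hi => Ent_insert_rest' v₀ hv hv₀ hv' i hi),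
        Finset.sum_neg_distrib, Ent]
      have : (τ : Finset V) ≠ τ' := fun hh => hv₀ (by rw [hh]; exact hv')
      rw [if_neg this, if_neg (Ne.symm this)]
      ring
    · rw [if_neg hv',
        Finset.sum_congr rfl (fun i hi => Ent_insert_rest v₀ hv₀ hv' i hi),
        Finset.sum_const_zero]
      by_cases heq : (τ : Finset V) = (τ' : Finset V)
      · rw [if_pos heq, if_pos heq.symm]; ring
      · rw [if_neg heq, if_neg (Ne.symm heq)]; ring

end Homotopy

section LinAlg

variable (k)

/-- Extension by zero. -/
noncomputable def extZ (s t : Finset (Finset V)) : (↥s → k) →ₗ[k] (↥t → k) where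
  toFun x τ := if h : τ.1 ∈ s then x ⟨τ.1, h⟩ else 0
  map_add' x y := by funext τ; by_cases h : τ.1 ∈ s <;> simp [h]
  map_smul' c x := by funext τ; by_cases h : τ.1 ∈ s <;> simp [h]

/-- Restriction. -/
noncomputable def resT (s t : Finset (Finset V)) (hst : s ⊆ t) : (↥t → k) →ₗ[k] (↥s → k) :=
  LinearMap.funLeft k k fun σ => ⟨σ.1, hst σ.2⟩

variable {k}

lemma extZ_apply (s t : Finset (Finset V)) (x : ↥s → k) (τ : ↥t) :
    extZ k s t x τ = if h : τ.1 ∈ s then x ⟨τ.1, h⟩ else 0 := rfl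

lemma resT_apply (s t : Finset (Finset V)) (hst : s ⊆ t) (x : ↥t → k) (σ : ↥s) :
    resT k s t hst x σ = x ⟨σ.1, hst σ.2⟩ := rfl

lemma resT_comp_extZ (s t : Finset (Finset V)) (hst : s ⊆ t) (x : ↥s → k) :
    resT k s t hst (extZ k s t x) = x := by
  funext σ
  rw [resT_apply, extZ_apply, dif_pos σ.2]

lemma extZ_injective (s t : Finset (Finset V)) (hst : s ⊆ t) :
    Function.Injective (extZ k s t) := by
  intro x y hxy
  have := congrArg (resT k s t hst) hxy
  rwa [resT_comp_extZ, resT_comp_extZ] at this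

variable {Δ : Finset (Finset V)}

lemma faces_subset_aF (t : ℤ) : cplxFaces Δ t ⊆ aF V t := fun τ hτ =>
  mem_aF.2 (mem_cplxFaces'.1 hτ).2

lemma nF_subset_aF (t : ℤ) : nF Δ t ⊆ aF V t := fun τ hτ =>
  mem_aF.2 (mem_nF.1 hτ).2

lemma mem_nF_of_not_face {t : ℤ} {σ : Finset V} (hσ : σ ∈ aF V t)
    (hσ' : σ ∉ cplxFaces Δ t) : σ ∈ nF Δ t :=
  mem_nF.2 ⟨fun hc => hσ' (mem_cplxFaces'.2 ⟨hc, mem_aF.1 hσ⟩), mem_aF.1 hσ⟩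

lemma mem_face_of_not_nF {t : ℤ} {σ : Finset V} (hσ : σ ∈ aF V t)
    (hσ' : σ ∉ nF Δ t) : σ ∈ cplxFaces Δ t := by
  rcases (em (σ ∈ Δ)) with h | h
  · exact mem_cplxFaces'.2 ⟨h, mem_aF.1 hσ⟩
  · exact absurd (mem_nF.2 ⟨h, mem_aF.1 hσ⟩) hσ'

lemma mulVecLin_gB_apply (s t : Finset (Finset V)) (x : ↥t → k) (τ' : ↥s) :
    (gB k s t).mulVecLin x τ' = ∑ τ : ↥t, Ent k τ'.1 τ.1 * x τ := by
  rw [Matrix.mulVecLin_apply]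
  rfl

/-- `∂` commutes with extension by zero, on faces of a complex. -/
lemma D_comp_extZ (hΔ : IsSimplicialComplex Δ) (t : ℤ) :
    (gB k (aF V (t - 1)) (aF V t)).mulVecLin ∘ₗ extZ k (cplxFaces Δ t) (aF V t)
      = extZ k (cplxFaces Δ (t - 1)) (aF V (t - 1))
          ∘ₗ (gB k (cplxFaces Δ (t - 1)) (cplxFaces Δ t)).mulVecLin := by
  apply LinearMap.ext; intro x
  funext τ'
  rw [LinearMap.comp_apply, LinearMap.comp_apply, mulVecLin_gB_apply, extZ_apply]
  have hLHS : ∑ τ : ↥(aF V t), Ent k τ'.1 τ.1 * extZ k (cplxFaces Δ t) (aF V t) x τ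
      = ∑ τ : ↥(cplxFaces Δ t), Ent k τ'.1 τ.1 * x τ := by
    have h1 : ∀ τ : ↥(aF V t), Ent k τ'.1 τ.1 * extZ k (cplxFaces Δ t) (aF V t) x τ
        = Ent k τ'.1 τ.1 * (if h : τ.1 ∈ cplxFaces Δ t then x ⟨τ.1, h⟩ else 0) := fun τ => rfl
    rw [Finset.sum_congr rfl fun τ _ => h1 τ,
      Finset.sum_coe_sort (aF V t)
        (fun σ => Ent k τ'.1 σ * (if h : σ ∈ cplxFaces Δ t then x ⟨σ, h⟩ else 0)),
      ← Finset.sum_subset (faces_subset_aF t)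
        (fun σ _ hσ => by rw [dif_neg hσ, mul_zero]),
      ← Finset.sum_coe_sort (cplxFaces Δ t)
        (fun σ => Ent k τ'.1 σ * (if h : σ ∈ cplxFaces Δ t then x ⟨σ, h⟩ else 0))]
    exact Finset.sum_congr rfl fun τ _ => by rw [dif_pos τ.2]
  rw [hLHS]
  split
  · rw [mulVecLin_gB_apply]
  · next hneg =>
    refine Finset.sum_eq_zero fun τ _ => ?_
    have hτ'Δ : τ'.1 ∉ Δ := fun hc => hneg (mem_cplxFaces'.2 ⟨hc, mem_aF.1 τ'.2⟩)
    rw [Ent_eq_zero_of_nonface hΔ (mem_cplxFaces'.1 τ.2).1 hτ'Δ, zero_mul]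

/-- `∂` commutes with restriction to nonfaces. -/
lemma resN_comp_D (hΔ : IsSimplicialComplex Δ) (t : ℤ) :
    resT k (nF Δ (t - 1)) (aF V (t - 1)) (nF_subset_aF _)
        ∘ₗ (gB k (aF V (t - 1)) (aF V t)).mulVecLin
      = (gB k (nF Δ (t - 1)) (nF Δ t)).mulVecLin ∘ₗ resT k (nF Δ t) (aF V t) (nF_subset_aF _) := by
  apply LinearMap.ext; intro x
  funext τ'
  rw [LinearMap.comp_apply, LinearMap.comp_apply, resT_apply, mulVecLin_gB_apply,
    mulVecLin_gB_apply]
  have h1 : ∀ τ : ↥(aF V t), Ent k (τ' : Finset V) τ.1 * x τ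
      = Ent k (τ' : Finset V) τ.1 * (if h : τ.1 ∈ aF V t then x ⟨τ.1, h⟩ else 0) := by
    intro τ; rw [dif_pos τ.2]
  have h2 : ∀ σ : ↥(nF Δ t), Ent k (τ' : Finset V) σ.1
        * resT k (nF Δ t) (aF V t) (nF_subset_aF _) x σ
      = Ent k (τ' : Finset V) σ.1 * (if h : σ.1 ∈ aF V t then x ⟨σ.1, h⟩ else 0) := by
    intro σ; rw [resT_apply, dif_pos (nF_subset_aF t σ.2)]
  rw [Finset.sum_congr rfl fun τ _ => h1 τ, Finset.sum_congr rfl fun σ _ => h2 σ,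
    Finset.sum_coe_sort (aF V t)
      (fun σ => Ent k (τ' : Finset V) σ * (if h : σ ∈ aF V t then x ⟨σ, h⟩ else 0)),
    Finset.sum_coe_sort (nF Δ t)
      (fun σ => Ent k (τ' : Finset V) σ * (if h : σ ∈ aF V t then x ⟨σ, h⟩ else 0))]
  refine (Finset.sum_subset (nF_subset_aF t) fun σ hσ hσ' => ?_).symm
  rw [Ent_eq_zero_of_nonface hΔ (mem_cplxFaces'.1 (mem_face_of_not_nF hσ hσ')).1
    (mem_nF.1 τ'.2).1, zero_mul]

lemma resN_comp_extZ (t : ℤ) :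
    ∀ x : ↥(cplxFaces Δ t) → k,
      resT k (nF Δ t) (aF V t) (nF_subset_aF _) (extZ k (cplxFaces Δ t) (aF V t) x) = 0 := by
  intro x
  funext σ
  rw [resT_apply, extZ_apply, dif_neg, Pi.zero_apply]
  intro hc
  exact (mem_nF.1 σ.2).1 (mem_cplxFaces'.1 hc).1

lemma eq_extZ_of_resN_eq_zero {t : ℤ} {x : ↥(aF V t) → k}
    (hx : resT k (nF Δ t) (aF V t) (nF_subset_aF _) x = 0) :
    x = extZ k (cplxFaces Δ t) (aF V t)
      (resT k (cplxFaces Δ t) (aF V t) (faces_subset_aF _) x) := by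
  funext τ
  rw [extZ_apply]
  split
  · rw [resT_apply]
  · next hneg =>
    have hN : τ.1 ∈ nF Δ t := mem_nF_of_not_face τ.2 hneg
    have := congrFun hx ⟨τ.1, hN⟩
    rwa [resT_apply, Pi.zero_apply] at this

lemma resN_surjective (t : ℤ) :
    Function.Surjective (resT k (nF Δ t) (aF V t) (nF_subset_aF (Δ := Δ) t)) := fun y =>
  ⟨extZ k (nF Δ t) (aF V t) y, resT_comp_extZ _ _ (nF_subset_aF t) y⟩

lemma erase_mem_aF {t : ℤ} {τ : Finset V} (hτ : τ ∈ aF V (t + 1)) {i : V} (hi : i ∈ τ) :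
    τ.erase i ∈ aF V t := by
  rw [mem_aF] at hτ ⊢
  have := card_erase_add_one hi
  push_cast [← this] at hτ ⊢
  omega

lemma DD_zero (t : ℤ) :
    gB k (aF V (t - 1)) (aF V t) * gB k (aF V t) (aF V (t + 1)) = 0 :=
  gB_mul_gB k _ _ _ fun τ hτ i hi => erase_mem_aF hτ hi

lemma exact_aF (v₀ : V) (hv : ∀ a : V, v₀ ≤ a) (t : ℤ) :
    LinearMap.ker (gB k (aF V (t - 1)) (aF V t)).mulVecLin
      ≤ LinearMap.range (gB k (aF V t) (aF V (t + 1))).mulVecLin := by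
  intro v hv'
  refine ⟨(gH (k := k) v₀ (aF V (t + 1)) (aF V t)).mulVecLin v, ?_⟩
  have hid := congrArg (fun M : Matrix ↥(aF V t) ↥(aF V t) k => M.mulVec v) (htpy v₀ hv t)
  simp only [Matrix.add_mulVec, ← Matrix.mulVec_mulVec, Matrix.one_mulVec] at hid
  have hz : (gB k (aF V (t - 1)) (aF V t)).mulVec v = 0 := hv'
  rw [hz, Matrix.mulVec_zero, add_zero] at hid
  exact hid

lemma range_le_ker (t : ℤ) :
    LinearMap.range (gB k (aF V t) (aF V (t + 1))).mulVecLin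
      ≤ LinearMap.ker (gB k (aF V (t - 1)) (aF V t)).mulVecLin := by
  rintro v ⟨u, rfl⟩
  show (gB k (aF V (t - 1)) (aF V t)).mulVecLin ((gB k (aF V t) (aF V (t + 1))).mulVecLin u) = 0
  rw [← LinearMap.comp_apply, ← Matrix.mulVecLin_mul, DD_zero, Matrix.mulVecLin_zero,
    LinearMap.zero_apply]

lemma E2 (v₀ : V) (hv : ∀ a : V, v₀ ≤ a) (t : ℤ) :
    (gB k (aF V (t - 1)) (aF V t)).rank + (gB k (aF V t) (aF V (t + 1))).rank
      = (aF V t).card := by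
  have hker : LinearMap.ker (gB k (aF V (t - 1)) (aF V t)).mulVecLin
      = LinearMap.range (gB k (aF V t) (aF V (t + 1))).mulVecLin :=
    le_antisymm (exact_aF v₀ hv t) (range_le_ker t)
  have := LinearMap.finrank_range_add_finrank_ker (gB k (aF V (t - 1)) (aF V t)).mulVecLin
  rw [hker] at this
  rw [Matrix.rank, Matrix.rank, this, Module.finrank_fintype_fun_eq_card, Fintype.card_coe]

lemma card_split (t : ℤ) :
    (aF V t).card = (cplxFaces Δ t).card + (nF Δ t).card := by
  have hu : (Finset.univ : Finset (Finset V)) = Δ ∪ (Finset.univ \ Δ) :=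
    (Finset.union_sdiff_of_subset (Finset.subset_univ Δ)).symm
  rw [aF, cplxFaces]
  conv_lhs => rw [hu]
  rw [Finset.filter_union, Finset.card_union_of_disjoint
    (Finset.disjoint_filter_filter Finset.disjoint_sdiff)]
  rfl

set_option maxHeartbeats 1000000 in
set_option synthInstance.maxHeartbeats 100000 in
/-- The key rank identity (★). -/
lemma E1 (hΔ : IsSimplicialComplex Δ) (v₀ : V) (hv : ∀ a : V, v₀ ≤ a) (t : ℤ) :
    (gB k (aF V t) (aF V (t + 1))).rank
        + (gB k (cplxFaces Δ (t - 1)) (cplxFaces Δ t)).rank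
      = (cplxFaces Δ t).card + (gB k (nF Δ t) (nF Δ (t + 1))).rank := by
  classical
  set D₂ := (gB k (aF V t) (aF V (t + 1))).mulVecLin with hD₂
  set Dt := (gB k (aF V (t - 1)) (aF V t)).mulVecLin with hDt
  set Al := (gB k (cplxFaces Δ (t - 1)) (cplxFaces Δ t)).mulVecLin with hAl
  set Yl := (gB k (nF Δ t) (nF Δ (t + 1))).mulVecLin with hYl
  set ιS := extZ k (cplxFaces Δ t) (aF V t) with hιS
  set ιS' := extZ k (cplxFaces Δ (t - 1)) (aF V (t - 1)) with hιS'
  set πN := resT k (nF Δ t) (aF V t) (nF_subset_aF (Δ := Δ) t) with hπN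
  set πNp := resT k (nF Δ (t + 1)) (aF V (t + 1)) (nF_subset_aF (Δ := Δ) (t + 1)) with hπNp
  set πS := resT k (cplxFaces Δ t) (aF V t) (faces_subset_aF (Δ := Δ) t) with hπS
  set R := LinearMap.range D₂ with hR
  -- rank-nullity on πN restricted to R
  have hsplit := LinearMap.finrank_range_add_finrank_ker (πN.comp R.subtype)
  have hrange : LinearMap.range (πN.comp R.subtype) = LinearMap.range Yl := by
    rw [LinearMap.range_comp, Submodule.range_subtype, hR, ← LinearMap.range_comp]
    have hcomm : πN.comp D₂ = Yl.comp πNp := by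
      have := resN_comp_D (k := k) hΔ (Δ := Δ) (t + 1)
      rw [show (t + 1 - 1 : ℤ) = t by ring] at this
      exact this
    rw [hcomm, LinearMap.range_comp, LinearMap.range_eq_top.2 (resN_surjective (t + 1)),
      Submodule.map_top]
  have hkerfin : Module.finrank k (LinearMap.ker (πN.comp R.subtype))
      = Module.finrank k (LinearMap.ker Al) := by
    rw [LinearMap.ker_comp]
    have hcomap : Submodule.comap R.subtype (LinearMap.ker πN)
        = Submodule.comap R.subtype (LinearMap.ker πN ⊓ R) := by
      ext x
      simp only [Submodule.mem_comap, Submodule.mem_inf]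
      exact ⟨fun hx => ⟨hx, x.2⟩, fun hx => hx.1⟩
    have hinf : LinearMap.ker πN ⊓ R = Submodule.map ιS (LinearMap.ker Al) := by
      ext v
      rw [Submodule.mem_inf, Submodule.mem_map]
      constructor
      · rintro ⟨hv1, hv2⟩
        obtain ⟨u, hu⟩ := hv2
        have hv1' : πN v = 0 := hv1
        have hDv : Dt v = 0 := by
          rw [← hu, hDt, hD₂, ← LinearMap.comp_apply, ← Matrix.mulVecLin_mul, DD_zero,
            Matrix.mulVecLin_zero, LinearMap.zero_apply]
        have hres : v = ιS (πS v) := eq_extZ_of_resN_eq_zero hv1'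
        have hAz : ιS' (Al (πS v)) = 0 := by
          have hc := congrFun (congrArg DFunLike.coe (D_comp_extZ (k := k) hΔ t)) (πS v)
          simp only [LinearMap.comp_apply] at hc
          rw [← hc, ← hres, hDv]
        have hA0 : Al (πS v) = 0 := by
          apply extZ_injective _ _ (faces_subset_aF (t - 1))
          rw [hAz, map_zero]
        exact ⟨πS v, hA0, hres.symm⟩
      · rintro ⟨w, hw, rfl⟩
        have hDz : Dt (ιS w) = 0 := by
          have hc := congrFun (congrArg DFunLike.coe (D_comp_extZ (k := k) hΔ t)) w
          simp only [LinearMap.comp_apply] at hc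
          rw [hc]
          show ιS' (Al w) = 0
          rw [show Al w = 0 from hw, map_zero]
        exact ⟨resN_comp_extZ t w, exact_aF v₀ hv t hDz⟩
    have h1 : Module.finrank k ↥(Submodule.comap R.subtype (LinearMap.ker πN ⊓ R))
        = Module.finrank k ↥(LinearMap.ker πN ⊓ R) :=
      (Submodule.comapSubtypeEquivOfLe (inf_le_right : LinearMap.ker πN ⊓ R ≤ R)).finrank_eq
    have h2 : Module.finrank k ↥(LinearMap.ker Al)
        = Module.finrank k ↥(Submodule.map ιS (LinearMap.ker Al)) :=
      (Submodule.equivMapOfInjective ιS (extZ_injective _ _ (faces_subset_aF t))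
        (LinearMap.ker Al)).finrank_eq
    rw [hcomap, h1, hinf]
    exact h2.symm
  -- assemble
  have hA := LinearMap.finrank_range_add_finrank_ker Al
  rw [Module.finrank_fintype_fun_eq_card, Fintype.card_coe] at hA
  have hrank2 : (gB k (aF V t) (aF V (t + 1))).rank = Module.finrank k ↥R := rfl
  have hrankY : (gB k (nF Δ t) (nF Δ (t + 1))).rank
      = Module.finrank k ↥(LinearMap.range Yl) := rfl
  have hrankA : (gB k (cplxFaces Δ (t - 1)) (cplxFaces Δ t)).rank
      = Module.finrank k ↥(LinearMap.range Al) := rfl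
  have hRR : Module.finrank k ↥R = Module.finrank k ↥(LinearMap.range (πN.comp R.subtype))
      + Module.finrank k ↥(LinearMap.ker (πN.comp R.subtype)) := by
    rw [hsplit]
  rw [hrange] at hRR
  rw [hkerfin] at hRR
  omega

end LinAlg

section Dual

variable (k)

/-- Global sign of a face. -/
noncomputable def eps (σ : Finset V) : k :=
  (-1 : k) ^ (∑ a ∈ σ, (Finset.univ.filter fun b => b < a).card)

variable {k}

lemma rk_split {τ : Finset V} {i : V} (hi : i ∈ τ) :
    (Finset.univ.filter fun b => b < i).card
      = (τ.filter fun a => a < i).card + (τᶜ.filter fun a => a < i).card := by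
  rw [← Finset.card_union_of_disjoint
    (Finset.disjoint_filter_filter (disjoint_compl_right : Disjoint τ τᶜ)), ← Finset.filter_union,
    Finset.union_compl]

lemma Ent_compl (τ' τ : Finset V) :
    Ent k τ' τ = eps k τ' * Ent k τᶜ τ'ᶜ * eps k τ := by
  by_cases hex : ∃ i ∈ τ, τ.erase i = τ'
  · obtain ⟨i, hi, rfl⟩ := hex
    have hic : i ∉ τᶜ := by simp [hi]
    have hL : Ent k (τ.erase i) τ = (-1 : k) ^ (τ.filter fun a => a < i).card := by
      rw [Ent, Finset.sum_eq_single_of_mem i hi]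
      · rw [if_pos rfl]
      · intro b hb hb'
        rw [if_neg]
        intro hc
        have h1 : i ∈ τ.erase b := mem_erase.2 ⟨fun hh => hb' hh.symm, hi⟩
        rw [hc] at h1
        exact (notMem_erase i τ) h1
    have hcompl : (τ.erase i)ᶜ = insert i τᶜ := compl_erase
    have hR : Ent k τᶜ ((τ.erase i)ᶜ) = (-1 : k) ^ (τᶜ.filter fun a => a < i).card := by
      rw [Ent, hcompl, Finset.sum_insert hic, if_pos (erase_insert hic)]
      have h2 : ((insert i τᶜ).filter fun a => a < i) = τᶜ.filter fun a => a < i := by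
        rw [Finset.filter_insert, if_neg (lt_irrefl i)]
      have h3 : ∀ x ∈ τᶜ, (if (insert i τᶜ).erase x = τᶜ then
          (-1 : k) ^ ((insert i τᶜ).filter fun a => a < x).card else 0) = 0 := by
        intro x hx
        rw [if_neg]
        intro hc
        have hxi : i ≠ x := fun hh => hic (hh ▸ hx)
        have h4 : i ∈ (insert i τᶜ).erase x := mem_erase.2 ⟨hxi, mem_insert_self _ _⟩
        rw [hc] at h4
        exact hic h4
      rw [Finset.sum_eq_zero h3, add_zero, h2]
    rw [hL, hR, eps, eps]
    have hsum : ∑ a ∈ τ, (Finset.univ.filter fun b => b < a).card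
        = ∑ a ∈ τ.erase i, (Finset.univ.filter fun b => b < a).card
          + (Finset.univ.filter fun b => b < i).card :=
      (Finset.sum_erase_add τ _ hi).symm
    rw [hsum, rk_split hi, ← pow_add, ← pow_add]
    conv_lhs => rw [neg_one_pow_eq_pow_mod_two]
    conv_rhs => rw [neg_one_pow_eq_pow_mod_two]
    congr 1
    omega
  · have hL : Ent k τ' τ = 0 := by
      rw [Ent]
      exact Finset.sum_eq_zero fun i hi => by
        rw [if_neg (fun hc => hex ⟨i, hi, hc⟩)]
    have hR : Ent k τᶜ τ'ᶜ = 0 := by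
      rw [Ent]
      refine Finset.sum_eq_zero fun x hx => ?_
      rw [if_neg]
      intro hc
      have hτ : insert x τ' = τ := by
        have := congrArg (·ᶜ) hc
        simpa [compl_erase] using this
      have hxτ' : x ∉ τ' := by simpa using hx
      exact hex ⟨x, by rw [← hτ]; exact mem_insert_self _ _,
        by rw [← hτ, erase_insert hxτ']⟩
    rw [hL, hR]
    ring

/-- The complementation equivalence. -/
def complE (s t : Finset (Finset V)) (h : ∀ σ, σ ∈ s ↔ σᶜ ∈ t) : ↥s ≃ ↥t where
  toFun σ := ⟨σ.1ᶜ, (h σ.1).1 σ.2⟩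
  invFun τ := ⟨τ.1ᶜ, (h τ.1ᶜ).2 (by rw [compl_compl]; exact τ.2)⟩
  left_inv σ := Subtype.ext (compl_compl σ.1)
  right_inv τ := Subtype.ext (compl_compl τ.1)

variable {Δ : Finset (Finset V)} {n : ℕ}

lemma mem_dual_iff (hn : Fintype.card V = n) {m d : ℤ} (hd : d = (n : ℤ) - m - 2)
    (σ : Finset V) : σ ∈ cplxFaces (alexDual Δ) m ↔ σᶜ ∈ nF Δ d := by
  rw [mem_cplxFaces', mem_nF, alexDual, Finset.mem_filter]
  have hcσ : (σᶜ.card : ℤ) = (n : ℤ) - σ.card := by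
    rw [Finset.card_compl, hn, Nat.cast_sub (hn ▸ Finset.card_le_univ σ)]
  constructor
  · rintro ⟨⟨-, h1⟩, h2⟩
    exact ⟨h1, by omega⟩
  · rintro ⟨h1, h2⟩
    exact ⟨⟨Finset.mem_univ _, h1⟩, by omega⟩

lemma diag_eps_isUnit (s : Finset (Finset V)) :
    IsUnit (Matrix.diagonal fun τ : ↥s => eps k τ.1).det := by
  rw [Matrix.det_diagonal]
  refine isUnit_iff_ne_zero.mpr (Finset.prod_ne_zero_iff.mpr fun τ _ => ?_)
  rw [eps]
  exact pow_ne_zero _ (neg_ne_zero.mpr one_ne_zero)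

lemma rank_submatrix_equiv {m m' nn nn' : Type*} [Fintype nn] [Fintype nn']
    (A : Matrix m nn k) (e₁ : m' ≃ m) (e₂ : nn' ≃ nn) :
    (A.submatrix e₁ e₂).rank = A.rank := by
  rw [Matrix.rank, Matrix.rank, Matrix.mulVecLin_submatrix, LinearMap.range_comp,
    LinearMap.range_comp,
    show LinearMap.funLeft k k ⇑e₂.symm
      = (LinearEquiv.funCongrLeft k k e₂.symm : (_ → k) →ₗ[k] _) from rfl,
    LinearEquiv.range, Submodule.map_top]
  exact LinearEquiv.finrank_map_eq (LinearEquiv.funCongrLeft k k e₁) _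

lemma dual_rank (hΔ : IsSimplicialComplex Δ) (hn : Fintype.card V = n) (m d d' : ℤ)
    (hd : d = (n : ℤ) - m - 2) (hd' : d' = (n : ℤ) - m - 1) :
    (gB k (cplxFaces (alexDual Δ) (m - 1)) (cplxFaces (alexDual Δ) m)).rank
      = (gB k (nF Δ d) (nF Δ d')).rank := by
  let e₁ : ↥(cplxFaces (alexDual Δ) (m - 1)) ≃ ↥(nF Δ d') :=
    complE _ _ (mem_dual_iff hn (by omega))
  let e₂ : ↥(cplxFaces (alexDual Δ) m) ≃ ↥(nF Δ d) :=
    complE _ _ (mem_dual_iff hn hd)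
  have heq : gB k (cplxFaces (alexDual Δ) (m - 1)) (cplxFaces (alexDual Δ) m)
      = Matrix.diagonal (fun τ' : ↥(cplxFaces (alexDual Δ) (m - 1)) => eps k τ'.1)
        * ((gB k (nF Δ d) (nF Δ d')).transpose.submatrix e₁ e₂)
        * Matrix.diagonal (fun τ : ↥(cplxFaces (alexDual Δ) m) => eps k τ.1) := by
    ext τ' τ
    rw [Matrix.mul_diagonal, Matrix.diagonal_mul, Matrix.submatrix_apply,
      Matrix.transpose_apply]
    show Ent k (τ' : Finset V) (τ : Finset V)
      = eps k (τ' : Finset V) * Ent k ((τ : Finset V)ᶜ) ((τ' : Finset V)ᶜ)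
        * eps k (τ : Finset V)
    exact Ent_compl _ _
  rw [heq, Matrix.rank_mul_eq_left_of_isUnit_det _ _ (diag_eps_isUnit _),
    Matrix.rank_mul_eq_right_of_isUnit_det _ _ (diag_eps_isUnit _),
    rank_submatrix_equiv, Matrix.rank_transpose]

end Dual

section Final

variable {Δ : Finset (Finset V)} {n : ℕ}

lemma rank_congr {s s' t t' : Finset (Finset V)} (hs : s = s') (ht : t = t') :
    (gB k s t).rank = (gB k s' t').rank := by
  subst hs; subst ht; rfl

lemma card_dual (hn : Fintype.card V = n) (m d : ℤ) (hd : d = (n : ℤ) - m - 2) :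
    (cplxFaces (alexDual Δ) m).card = (nF Δ d).card := by
  rw [← Fintype.card_coe, ← Fintype.card_coe]
  exact Fintype.card_congr (complE _ _ (mem_dual_iff hn hd))

end Final

end AlexDualAux

open AlexDualAux in
theorem alexander_duality' (k : Type*) [Field k] {V : Type*} [LinearOrder V] [Fintype V]
    (n : ℕ) (hn : Fintype.card V = n) (hpos : 0 < n)
    (Δ : Finset (Finset V)) (h : IsSimplicialComplex Δ) (i : ℤ) :
    redHomDim k (alexDual Δ) i = redCohomDim k Δ ((n : ℤ) - 3 - i) := by
  classical
  have hne : Nonempty V := Fintype.card_pos_iff.mp (by omega)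
  obtain ⟨v₀, hv⟩ : ∃ v₀ : V, ∀ a : V, v₀ ≤ a :=
    ⟨(Finset.univ : Finset V).min' Finset.univ_nonempty,
      fun a => Finset.min'_le _ a (Finset.mem_univ a)⟩
  set j : ℤ := (n : ℤ) - 3 - i with hj
  -- the three master equations
  have e1 := E1 (k := k) h v₀ hv j
  have e1' := E1 (k := k) h v₀ hv (j + 1)
  have e2 := E2 (k := k) (V := V) v₀ hv (j + 1)
  have csplit := card_split (V := V) (Δ := Δ) (j + 1)
  rw [rank_congr (show cplxFaces Δ (j + 1 - 1) = cplxFaces Δ j by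
    rw [show (j + 1 - 1 : ℤ) = j by ring]) rfl] at e1'
  rw [rank_congr (show aF V (j + 1 - 1) = aF V j by
    rw [show (j + 1 - 1 : ℤ) = j by ring]) rfl] at e2
  -- identify the four matrix ranks appearing in the statement
  have hBi : (bMat k (cplxFaces (alexDual Δ)) i).rank
      = (gB k (nF Δ (j + 1)) (nF Δ (j + 1 + 1))).rank := by
    rw [bMat_eq_gB, dual_rank h hn i ((n : ℤ) - i - 2) ((n : ℤ) - i - 1) rfl rfl]
    exact rank_congr (by rw [show ((n : ℤ) - i - 2) = j + 1 by omega])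
      (by rw [show ((n : ℤ) - i - 1) = j + 1 + 1 by omega])
  have hBi1 : (bMat k (cplxFaces (alexDual Δ)) (i + 1)).rank
      = (gB k (nF Δ j) (nF Δ (j + 1))).rank := by
    rw [bMat_eq_gB, dual_rank h hn (i + 1) ((n : ℤ) - (i + 1) - 2) ((n : ℤ) - (i + 1) - 1) rfl rfl]
    exact rank_congr (by rw [show ((n : ℤ) - (i + 1) - 2) = j by omega])
      (by rw [show ((n : ℤ) - (i + 1) - 1) = j + 1 by omega])
  have hcard : (cplxFaces (alexDual Δ) i).card = (nF Δ (j + 1)).card := by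
    rw [card_dual (Δ := Δ) hn i ((n : ℤ) - i - 2) rfl,
      show ((n : ℤ) - i - 2) = j + 1 by omega]
  have hT1 : (bMat k (cplxFaces Δ) (j + 1)).transpose.rank
      = (gB k (cplxFaces Δ j) (cplxFaces Δ (j + 1))).rank := by
    rw [Matrix.rank_transpose, bMat_eq_gB]
    exact rank_congr (by rw [show (j + 1 - 1 : ℤ) = j by ring]) rfl
  have hT2 : (bMat k (cplxFaces Δ) j).transpose.rank
      = (gB k (cplxFaces Δ (j - 1)) (cplxFaces Δ j)).rank := by
    rw [Matrix.rank_transpose, bMat_eq_gB]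
  rw [redHomDim, homDimAt, redCohomDim, cohomDimAt, hBi, hBi1, hcard, hT1, hT2]
  omega

/-- simplicial Alexander duality: for an abstract simplicial complex `Δ`
on a vertex set `V` with `|V| = n` and every integer `i`, the `i`-th reduced homology
of the Alexander dual `Δ*` with coefficients in a field `k` is isomorphic to the
`(n - 3 - i)`-th reduced cohomology of `Δ`; here stated as equality of `k`-dimensions. -/
theorem alexander_duality (k : Type*) [Field k] {V : Type*} [LinearOrder V] [Fintype V]
    (n : ℕ) (hn : Fintype.card V = n) (hpos : 0 < n)
    (Δ : Finset (Finset V)) (h : IsSimplicialComplex Δ) (i : ℤ) :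
    redHomDim k (alexDual Δ) i = redCohomDim k Δ ((n : ℤ) - 3 - i) := by
  exact alexander_duality' k n hn hpos Δ h i
end

section
/- Hochster's formula: for a simplicial complex Δ on {1,…,n} and σ ⊆ {1,…,n}, the ℕⁿ-graded Betti number β_{i,σ}(S/I_Δ) of the Stanley-Reisner ring over S = k[x₁,…,x_n] in squarefree degree σ equals dim_k H̃^{|σ|−i−1}(Δ|_σ; k), the dimension of reduced simplicial cohomology of the restriction of Δ to σ. -/
open Finset

/-- Membership of the squarefree monomial `x^w` in the squarefree monomial ideal
generated by `{x^g : g ∈ G}`: some generator divides `x^w`. -/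
def memSqIdeal {n : ℕ} (G : Finset (Finset (Fin n))) (w : Finset (Fin n)) : Prop :=
  ∃ g ∈ G, g ⊆ w


instance {n : ℕ} (G : Finset (Finset (Fin n))) (w : Finset (Fin n)) :
    Decidable (memSqIdeal G w) := by
  unfold memSqIdeal; infer_instance

/-- The degree-`σ̃` strand of `S/I ⊗ K_•` (`K_•` the Koszul resolution of `k`):
in homological degree `j` a basis is given by the `τ ⊆ σ` with `|τ| = j` such
that the monomial `x^(σ∖τ)` does not lie in `I = ⟨x^g : g ∈ G⟩`. -/
def kFacesQ {n : ℕ} (G : Finset (Finset (Fin n))) (σ : Finset (Fin n)) (j : ℤ) :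
    Finset (Finset (Fin n)) :=
  σ.powerset.filter fun τ => (τ.card : ℤ) = j ∧ ¬ memSqIdeal G (σ \ τ)

/-- The degree-`σ̃` strand of `I ⊗ K_•`: in homological degree `j` a basis is given
by the `τ ⊆ σ` with `|τ| = j` such that `x^(σ∖τ) ∈ I = ⟨x^g : g ∈ G⟩`. -/
def kFacesI {n : ℕ} (G : Finset (Finset (Fin n))) (σ : Finset (Fin n)) (j : ℤ) :
    Finset (Finset (Fin n)) :=
  σ.powerset.filter fun τ => (τ.card : ℤ) = j ∧ memSqIdeal G (σ \ τ)

/-- The graded Betti number `β_{i,σ}(S/I) = dim_k Tor_i^S(S/I, k)_σ̃` of the quotient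
by the squarefree monomial ideal `I = ⟨x^g : g ∈ G⟩`, computed as the `i`-th homology
of the degree-`σ̃` strand of `S/I` tensored with the Koszul resolution of `k`. -/
noncomputable def bettiQ (k : Type*) [Field k] {n : ℕ} (G : Finset (Finset (Fin n)))
    (i : ℕ) (σ : Finset (Fin n)) : ℕ :=
  homDimAt k (kFacesQ G σ) (i : ℤ)

/-- The graded Betti number `β_{i,σ}(I) = dim_k Tor_i^S(I, k)_σ̃` of the squarefree
monomial ideal `I = ⟨x^g : g ∈ G⟩`, computed as the `i`-th homology of the
degree-`σ̃` strand of `I` tensored with the Koszul resolution of `k`. -/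
noncomputable def bettiI (k : Type*) [Field k] {n : ℕ} (G : Finset (Finset (Fin n)))
    (i : ℕ) (σ : Finset (Fin n)) : ℕ :=
  homDimAt k (kFacesI G σ) (i : ℤ)

section HochsterAux

open Matrix

variable {n : ℕ}

lemma notMemSqIdeal_iff {Δ : Finset (Finset (Fin n))} (h : IsSimplicialComplex Δ)
    (w : Finset (Fin n)) :
    ¬ memSqIdeal (Finset.univ.filter fun τ : Finset (Fin n) => τ ∉ Δ) w ↔ w ∈ Δ := by
  constructor
  · intro hw
    by_contra hwΔ
    exact hw ⟨w, by simp [hwΔ], subset_rfl⟩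
  · rintro hwΔ ⟨g, hg, hsub⟩
    simp only [mem_filter, mem_univ, true_and] at hg
    exact hg (h w hwΔ g hsub)

lemma mem_kFacesQ_iff {Δ : Finset (Finset (Fin n))} (h : IsSimplicialComplex Δ)
    (σ : Finset (Fin n)) (j : ℤ) (τ : Finset (Fin n)) :
    τ ∈ kFacesQ (Finset.univ.filter fun τ : Finset (Fin n) => τ ∉ Δ) σ j ↔
      τ ⊆ σ ∧ (τ.card : ℤ) = j ∧ σ \ τ ∈ Δ := by
  simp [kFacesQ, mem_filter, mem_powerset, notMemSqIdeal_iff h, and_assoc]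

lemma mem_cplxFacesR_iff (Δ : Finset (Finset (Fin n))) (σ : Finset (Fin n))
    (m : ℤ) (ρ : Finset (Fin n)) :
    ρ ∈ cplxFaces (restrict Δ σ) m ↔ ρ ∈ Δ ∧ ρ ⊆ σ ∧ (ρ.card : ℤ) = m + 1 := by
  simp only [cplxFaces, _root_.restrict, mem_filter]
  tauto

/-- The complementation bijection between the degree-σ strand basis and faces of Δ|σ. -/
def eQ {Δ : Finset (Finset (Fin n))} (h : IsSimplicialComplex Δ) (σ : Finset (Fin n))
    (j m : ℤ) (hm : m + 1 = (σ.card : ℤ) - j) :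
    { x // x ∈ kFacesQ (Finset.univ.filter fun τ : Finset (Fin n) => τ ∉ Δ) σ j } ≃
    { x // x ∈ cplxFaces (restrict Δ σ) m } where
  toFun τ := ⟨σ \ τ.1, by
    obtain ⟨h1, h2, h3⟩ := (mem_kFacesQ_iff h σ j τ.1).mp τ.2
    refine (mem_cplxFacesR_iff Δ σ m _).mpr ⟨h3, sdiff_subset, ?_⟩
    rw [card_sdiff_of_subset h1, Nat.cast_sub (card_le_card h1), h2]
    omega⟩
  invFun ρ := ⟨σ \ ρ.1, by
    obtain ⟨h1, h2, h3⟩ := (mem_cplxFacesR_iff Δ σ m ρ.1).mp ρ.2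
    refine (mem_kFacesQ_iff h σ j _).mpr ⟨sdiff_subset, ?_, ?_⟩
    · rw [card_sdiff_of_subset h2, Nat.cast_sub (card_le_card h2), h3]
      omega
    · rwa [Finset.sdiff_sdiff_eq_self h2]⟩
  left_inv τ := Subtype.ext (Finset.sdiff_sdiff_eq_self ((mem_kFacesQ_iff h σ j τ.1).mp τ.2).1)
  right_inv ρ := Subtype.ext (Finset.sdiff_sdiff_eq_self ((mem_cplxFacesR_iff Δ σ m ρ.1).mp ρ.2).2.1)

/-- The sign of a face: `(-1)` to the sum over `a ∈ τ` of the number of elements of `σ`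
below `a`. -/
noncomputable def sgn (k : Type*) [Field k] {V : Type*} [LinearOrder V] (σ τ : Finset V) : k :=
  (-1 : k) ^ (∑ a ∈ τ, (σ.filter fun b => b < a).card)

lemma erase_injective_at {α : Type*} [DecidableEq α] {s : Finset α} {a b : α}
    (ha : a ∈ s) (hab : s.erase a = s.erase b) : a = b := by
  by_contra hne
  have h1 : a ∈ s.erase b := Finset.mem_erase.mpr ⟨hne, ha⟩
  rw [← hab] at h1
  exact Finset.notMem_erase a s h1

lemma neg_pow_helper (k : Type*) [Field k] (a b s : ℕ) :
    (-1 : k) ^ a = (-1 : k) ^ s * (-1 : k) ^ b * (-1 : k) ^ (a + b + s) := by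
  rw [← pow_add, ← pow_add, show s + b + (a + b + s) = a + 2 * (b + s) from by ring,
    pow_add, pow_mul, neg_one_sq, one_pow, mul_one]

/-- The key entrywise sum identity relating the strand boundary to the simplicial
coboundary, up to signs. -/
lemma key_sum (k : Type*) [Field k] {V : Type*} [LinearOrder V] (σ τ' τ : Finset V) (hτ : τ ⊆ σ)
    (hτ' : τ' ⊆ σ) (hc : τ'.card + 1 = τ.card) :
    (∑ i ∈ τ, if τ.erase i = τ' then (-1 : k) ^ (τ.filter fun a => a < i).card else 0) =
      sgn k σ τ' *
        (∑ i ∈ σ \ τ', if (σ \ τ').erase i = σ \ τ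
            then (-1 : k) ^ ((σ \ τ').filter fun a => a < i).card else 0) *
      sgn k σ τ := by
  by_cases hsub : τ' ⊆ τ
  · obtain ⟨i, hi⟩ : ∃ i, τ \ τ' = {i} := Finset.card_eq_one.mp (by
      rw [card_sdiff_of_subset hsub]; omega)
    have hiτ : i ∈ τ := (Finset.mem_sdiff.mp (hi ▸ Finset.mem_singleton_self i)).1
    have hiτ' : i ∉ τ' := (Finset.mem_sdiff.mp (hi ▸ Finset.mem_singleton_self i)).2
    have heq : τ.erase i = τ' := by
      rw [Finset.erase_eq, ← hi]
      exact Finset.sdiff_sdiff_eq_self hsub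
    have hins : insert i τ' = τ := by rw [← heq, Finset.insert_erase hiτ]
    have hiστ' : i ∈ σ \ τ' := Finset.mem_sdiff.mpr ⟨hτ hiτ, hiτ'⟩
    have heq2 : (σ \ τ').erase i = σ \ τ := by
      ext a
      by_cases hai : a = i
      · subst hai
        simp [Finset.mem_sdiff, hiτ]
      · simp only [Finset.mem_erase, Finset.mem_sdiff, ← hins, Finset.mem_insert, hai]
        tauto
    have hLHS : (∑ i ∈ τ, if τ.erase i = τ' then (-1 : k) ^ (τ.filter fun a => a < i).card
        else 0) = (-1 : k) ^ (τ.filter fun a => a < i).card := by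
      rw [Finset.sum_eq_single_of_mem i hiτ]
      · rw [if_pos heq]
      · intro b hb hbne
        exact if_neg fun hcon => hbne (erase_injective_at hb (hcon.trans heq.symm))
    have hRHS : (∑ i ∈ σ \ τ', if (σ \ τ').erase i = σ \ τ
          then (-1 : k) ^ ((σ \ τ').filter fun a => a < i).card else 0) =
        (-1 : k) ^ ((σ \ τ').filter fun a => a < i).card := by
      rw [Finset.sum_eq_single_of_mem i hiστ']
      · rw [if_pos heq2]
      · intro b hb hbne
        exact if_neg fun hcon => hbne (erase_injective_at hb (hcon.trans heq2.symm))
    rw [hLHS, hRHS]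
    have hset : σ \ τ' = insert i (σ \ τ) := by
      ext a
      by_cases hai : a = i
      · subst hai
        simp [Finset.mem_sdiff, hτ hiτ, hiτ']
      · simp [Finset.mem_sdiff, Finset.mem_insert, hai, ← hins]
    have hBfix : ((σ \ τ').filter fun a => a < i).card = ((σ \ τ).filter fun a => a < i).card := by
      rw [hset, Finset.filter_insert, if_neg (lt_irrefl i)]
    have hsplit : (σ.filter fun a => a < i) =
        (τ.filter fun a => a < i) ∪ ((σ \ τ).filter fun a => a < i) := by
      rw [← Finset.filter_union, Finset.union_sdiff_of_subset hτ]
    have hABC : (σ.filter fun a => a < i).card =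
        (τ.filter fun a => a < i).card + ((σ \ τ).filter fun a => a < i).card := by
      rw [hsplit, Finset.card_union_of_disjoint]
      exact Finset.disjoint_filter_filter Finset.disjoint_sdiff
    rw [hBfix]
    unfold sgn
    have hsum : (∑ a ∈ τ, (σ.filter fun b => b < a).card)
        = (σ.filter fun b => b < i).card + ∑ a ∈ τ', (σ.filter fun b => b < a).card := by
      rw [← hins, Finset.sum_insert hiτ']
    rw [hsum, hABC]
    exact neg_pow_helper k _ _ _
  · have hLHS : (∑ i ∈ τ, if τ.erase i = τ' then (-1 : k) ^ (τ.filter fun a => a < i).card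
        else 0) = 0 := by
      refine Finset.sum_eq_zero fun b hb => if_neg fun hcon => hsub ?_
      rw [← hcon]
      exact Finset.erase_subset b τ
    have hRHS : (∑ i ∈ σ \ τ', if (σ \ τ').erase i = σ \ τ
          then (-1 : k) ^ ((σ \ τ').filter fun a => a < i).card else 0) = 0 := by
      refine Finset.sum_eq_zero fun b hb => if_neg fun hcon => hsub fun a ha => ?_
      have hsd : σ \ τ ⊆ σ \ τ' := by
        rw [← hcon]
        exact Finset.erase_subset b (σ \ τ')
      by_contra hcon2
      exact (Finset.mem_sdiff.mp (hsd (Finset.mem_sdiff.mpr ⟨hτ' ha, hcon2⟩))).2 ha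
    rw [hLHS, hRHS, mul_zero, zero_mul]

/-- The strand boundary matrix equals the transposed simplicial boundary matrix of the
restricted complex, conjugated by sign diagonal matrices. -/
lemma bMat_eq (k : Type*) [Field k] {Δ : Finset (Finset (Fin n))} (h : IsSimplicialComplex Δ)
    (σ : Finset (Fin n)) (j m : ℤ) (hm : m = (σ.card : ℤ) - j) :
    bMat k (kFacesQ (Finset.univ.filter fun τ : Finset (Fin n) => τ ∉ Δ) σ) j =
      Matrix.diagonal (fun τ' : { x // x ∈ kFacesQ
          (Finset.univ.filter fun τ : Finset (Fin n) => τ ∉ Δ) σ (j - 1) } => sgn k σ τ'.1) *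
      ((bMat k (cplxFaces (restrict Δ σ)) m).transpose.submatrix
        (eQ h σ (j - 1) m (by omega)) (eQ h σ j (m - 1) (by omega))) *
      Matrix.diagonal (fun τ : { x // x ∈ kFacesQ
          (Finset.univ.filter fun τ : Finset (Fin n) => τ ∉ Δ) σ j } => sgn k σ τ.1) := by
    ext τ' τ
    obtain ⟨ht1, ht2, ht3⟩ := (mem_kFacesQ_iff h σ j τ.1).mp τ.2
    obtain ⟨hs1, hs2, hs3⟩ := (mem_kFacesQ_iff h σ (j - 1) τ'.1).mp τ'.2
    have hc : τ'.1.card + 1 = τ.1.card := by omega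
    simp only [Matrix.mul_diagonal, Matrix.diagonal_mul, Matrix.submatrix_apply,
      Matrix.transpose_apply, bMat, Matrix.of_apply, eQ, Equiv.coe_fn_mk]
    convert key_sum k σ τ'.1 τ.1 ht1 hs1 hc using 2 <;> congr!

lemma rank_reindex_rect {m m' p p' : Type*} [Fintype m] [Fintype m'] [Fintype p] [Fintype p']
    {R : Type*} [Field R] (e₁ : m ≃ m') (e₂ : p ≃ p') (A : Matrix m p R) :
    ((Matrix.reindex e₁ e₂) A).rank = A.rank := by
  rw [Matrix.rank, Matrix.rank, Matrix.mulVecLin_reindex, LinearMap.range_comp,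
    LinearMap.range_comp, LinearEquiv.range, Submodule.map_top, LinearEquiv.finrank_map_eq]

lemma sgn_diag_isUnit_det (k : Type*) [Field k] {ι : Type*} [Fintype ι] [DecidableEq ι]
    {V : Type*} [LinearOrder V] (σ : Finset V) (f : ι → Finset V) :
    IsUnit (Matrix.diagonal fun x : ι => sgn k σ (f x)).det := by
  rw [Matrix.det_diagonal]
  refine isUnit_iff_ne_zero.mpr (Finset.prod_ne_zero_iff.mpr fun x _ => ?_)
  exact pow_ne_zero _ (neg_ne_zero.mpr one_ne_zero)

lemma rank_bMat_eq (k : Type*) [Field k] {Δ : Finset (Finset (Fin n))}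
    (h : IsSimplicialComplex Δ) (σ : Finset (Fin n)) (j : ℤ) :
    (bMat k (kFacesQ (Finset.univ.filter fun τ : Finset (Fin n) => τ ∉ Δ) σ) j).rank =
      (bMat k (cplxFaces (restrict Δ σ)) ((σ.card : ℤ) - j)).rank := by
  rw [bMat_eq k h σ j ((σ.card : ℤ) - j) rfl]
  rw [Matrix.rank_mul_eq_left_of_isUnit_det _ _ (sgn_diag_isUnit_det k σ _)]
  rw [Matrix.rank_mul_eq_right_of_isUnit_det _ _ (sgn_diag_isUnit_det k σ _)]
  have hsub : ((bMat k (cplxFaces (restrict Δ σ)) ((σ.card : ℤ) - j)).transpose.submatrix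
      (eQ h σ (j - 1) ((σ.card : ℤ) - j) (by omega)) (eQ h σ j ((σ.card : ℤ) - j - 1) (by omega)))
      = (Matrix.reindex (eQ h σ (j - 1) ((σ.card : ℤ) - j) (by omega)).symm
          (eQ h σ j ((σ.card : ℤ) - j - 1) (by omega)).symm)
        (bMat k (cplxFaces (restrict Δ σ)) ((σ.card : ℤ) - j)).transpose := by
    rw [Matrix.reindex_apply, Equiv.symm_symm, Equiv.symm_symm]
  rw [hsub, rank_reindex_rect, Matrix.rank_transpose]

lemma card_kFacesQ_eq {Δ : Finset (Finset (Fin n))} (h : IsSimplicialComplex Δ)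
    (σ : Finset (Fin n)) (j m : ℤ) (hm : m + 1 = (σ.card : ℤ) - j) :
    (kFacesQ (Finset.univ.filter fun τ : Finset (Fin n) => τ ∉ Δ) σ j).card =
      (cplxFaces (restrict Δ σ) m).card := by
  rw [← Fintype.card_coe, ← Fintype.card_coe]
  exact Fintype.card_congr (eQ h σ j m hm)

end HochsterAux

/-- Hochster's formula: for a simplicial complex `Δ` on `{1,…,n}` and
`σ ⊆ {1,…,n}`, the graded Betti number `β_{i,σ}(S/I_Δ)` of the Stanley-Reisner ring
(here `I_Δ = ⟨x^τ : τ ∉ Δ⟩`) in squarefree degree `σ` equals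
`dim_k H̃^{|σ|-i-1}(Δ|_σ; k)`. -/
theorem hochster_formula (k : Type*) [Field k] {n : ℕ}
    (Δ : Finset (Finset (Fin n))) (h : IsSimplicialComplex Δ)
    (σ : Finset (Fin n)) (i : ℕ) :
    bettiQ k (Finset.univ.filter fun τ : Finset (Fin n) => τ ∉ Δ) i σ
      = redCohomDim k (restrict Δ σ) ((σ.card : ℤ) - i - 1) := by
  simp only [bettiQ, redCohomDim, cohomDimAt, homDimAt, Matrix.rank_transpose]
  have e1 : ((σ.card : ℤ) - i - 1 + 1) = (σ.card : ℤ) - i := by ring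
  have e2 : ((σ.card : ℤ) - ((i : ℤ) + 1)) = (σ.card : ℤ) - i - 1 := by ring
  rw [e1, card_kFacesQ_eq h σ i ((σ.card : ℤ) - i - 1) (by ring),
    rank_bMat_eq k h σ (i : ℤ)]
  have := rank_bMat_eq k h σ ((i : ℤ) + 1)
  rw [e2] at this
  rw [this]
end

section
/- Let I = ⟨m₁,…,m_t⟩ be a monomial ideal in S = k[x₁,…,x_n] and for τ ⊆ {1,…,t} let a_τ := deg lcm{m_i : i ∈ τ} ∈ ℤⁿ. Then the graded Betti number β_{r,u}(S/I) vanishes for every u ∈ ℤⁿ that is not of the form a_τ for some τ ⊆ {1,…,t}. -/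
open Finset

/-- The degree-`u` strand of `S/I ⊗ K_•` (`K_•` the Koszul resolution of `k`) for the
monomial ideal `I = ⟨x^(m 0), …, x^(m (t-1))⟩`: in homological degree `j`, a basis is
given by the subsets `τ ⊆ {1,…,n}` with `|τ| = j` such that `u - χ_τ ≥ 0` and the
monomial `x^(u - χ_τ)` does not lie in `I`. -/
def kFacesGen {n t : ℕ} (m : Fin t → Fin n → ℕ) (u : Fin n → ℤ) (j : ℤ) :
    Finset (Finset (Fin n)) :=
  Finset.univ.filter fun τ : Finset (Fin n) =>
    (τ.card : ℤ) = j ∧ (∀ i, (if i ∈ τ then 1 else 0 : ℤ) ≤ u i) ∧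
      ¬ ∃ l : Fin t, ∀ i, (m l i : ℤ) ≤ u i - (if i ∈ τ then 1 else 0)

/-- The graded Betti number `β_{r,u}(S/I) = dim_k Tor_r^S(S/I, k)_u` of the quotient by
the monomial ideal `I = ⟨x^(m 0), …, x^(m (t-1))⟩` in the fine degree `u ∈ ℤⁿ`,
computed via the degree-`u` strand of `S/I` tensored with the Koszul resolution of `k`. -/
noncomputable def bettiGen (k : Type*) [Field k] {n t : ℕ} (m : Fin t → Fin n → ℕ)
    (r : ℕ) (u : Fin n → ℤ) : ℕ :=
  homDimAt k (kFacesGen m u) (r : ℤ)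


/-! ### Auxiliary development: cone homotopy and exactness -/

section ConeAux

variable {k : Type*} [Field k] {V : Type*} [LinearOrder V] [Fintype V]

/-- General rank subadditivity for matrices over a field. -/
lemma matrixRank_add_le {m' n' : Type*} [Fintype m'] [Fintype n']
    (A B : Matrix m' n' k) : (A + B).rank ≤ A.rank + B.rank := by
  classical
  rw [Matrix.rank, Matrix.rank, Matrix.rank, Matrix.mulVecLin_add]
  have hle : LinearMap.range (A.mulVecLin + B.mulVecLin) ≤
      LinearMap.range A.mulVecLin ⊔ LinearMap.range B.mulVecLin := by
    rintro x ⟨y, rfl⟩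
    exact Submodule.add_mem_sup ⟨y, rfl⟩ ⟨y, rfl⟩
  exact le_trans (Submodule.finrank_mono hle)
    (Submodule.finrank_add_le_finrank_add_finrank _ _)

/-- Reindexing rows by an equivalence does not increase the rank. -/
lemma matrixRank_submatrix_le {l' m' n' : Type*} [Fintype l'] [Fintype m'] [Fintype n']
    (A : Matrix m' n' k) (e : l' ≃ m') : (A.submatrix e id).rank ≤ A.rank := by
  classical
  have h : A.submatrix (⇑e) id = A.submatrix (⇑e) (⇑(Equiv.refl n')) := by
    simp
  rw [h, Matrix.rank, Matrix.rank, Matrix.mulVecLin_submatrix]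
  rw [LinearMap.range_comp, LinearMap.range_comp]
  refine le_trans (Submodule.finrank_map_le _ _) ?_
  exact Submodule.finrank_mono (LinearMap.map_le_range)

/-- The cone chain homotopy matrix with apex `i0`. -/
noncomputable def coneH (k : Type*) [Field k] {V : Type*} [LinearOrder V] [Fintype V]
    (i0 : V) (s t : Finset (Finset V)) : Matrix s t k :=
  Matrix.of fun rho tau => if i0 ∉ tau.1 ∧ rho.1 = insert i0 tau.1
    then (-1 : k) ^ (tau.1.filter fun a => a < i0).card else 0

lemma card_filter_insert (tau : Finset V) (i0 a : V) (h : i0 ∉ tau) :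
    ((insert i0 tau).filter fun x => x < a).card
      = (tau.filter fun x => x < a).card + (if i0 < a then 1 else 0) := by
  rw [Finset.filter_insert]
  split
  · rw [Finset.card_insert_of_notMem (by simp [h])]
  · simp

lemma card_filter_erase (tau : Finset V) (a b : V) (ha : a ∈ tau) :
    (tau.filter fun x => x < b).card
      = ((tau.erase a).filter fun x => x < b).card + (if a < b then 1 else 0) := by
  rw [Finset.filter_erase]
  by_cases hab : a < b
  · rw [if_pos hab]
    have hmem : a ∈ tau.filter (fun x => x < b) := Finset.mem_filter.2 ⟨ha, hab⟩
    have h1 := Finset.card_erase_of_mem hmem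
    have h2 : 0 < (tau.filter fun x => x < b).card := Finset.card_pos.2 ⟨a, hmem⟩
    omega
  · rw [if_neg hab, Finset.erase_eq_of_notMem (by simp [hab]), add_zero]

lemma sign_cancel (tau : Finset V) (a i0 : V) (ha : a ∈ tau) (hi : i0 ∉ tau) :
    (-1 : k) ^ ((insert i0 tau).filter fun x => x < a).card
        * (-1 : k) ^ (tau.filter fun x => x < i0).card
      + (-1 : k) ^ ((tau.erase a).filter fun x => x < i0).card
        * (-1 : k) ^ (tau.filter fun x => x < a).card = 0 := by
  have hne : a ≠ i0 := fun h => hi (h ▸ ha)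
  rw [card_filter_insert tau i0 a hi, card_filter_erase tau a i0 ha]
  rcases hne.lt_or_gt with h | h
  · rw [if_pos h, if_neg (asymm h)]
    simp only [pow_add, pow_one, pow_zero, add_zero, mul_one]
    ring
  · rw [if_neg (asymm h), if_pos h]
    simp only [pow_add, pow_one, pow_zero, add_zero, mul_one]
    ring

lemma sum_subtype_ite {M : Type*} [AddCommMonoid M] (s : Finset (Finset V))
    (b : Finset V) (g : Finset V → M) :
    (∑ x : s, (if b = x.1 then g x.1 else 0)) = if b ∈ s then g b else 0 := by
  classical
  rw [Finset.sum_coe_sort s (fun x => if b = x then g x else 0)]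
  exact Finset.sum_ite_eq s b g

/-- The key chain homotopy identity `∂ ∘ S + S ∘ ∂ = 1` for a cone with apex `i0`. -/
lemma coneH_key (i0 : V) (Q : Finset V → Prop)
    (hQi : ∀ tau, Q tau → Q (insert i0 tau)) (hQe : ∀ tau, Q tau → Q (tau.erase i0))
    (F : ℤ → Finset (Finset V)) (hF : ∀ j tau, tau ∈ F j ↔ (tau.card : ℤ) = j ∧ Q tau)
    (j : ℤ) (e : (F (j + 1 - 1) : Type _) ≃ (F j : Type _))
    (he : ∀ x, ((e x : Finset V)) = (x : Finset V)) :
    (bMat k F (j + 1)).submatrix e.symm id * coneH k i0 (F (j + 1)) (F j)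
      + coneH k i0 (F j) (F (j - 1)) * bMat k F j = 1 := by
  classical
  have he' : ∀ x : (F j : Type _), ((e.symm x : Finset V)) = (x : Finset V) := by
    intro x
    conv_rhs => rw [← Equiv.apply_symm_apply e x]
    rw [he]
  ext tau' tau
  obtain ⟨htc, htQ⟩ := (hF j tau.1).1 tau.2
  obtain ⟨htc', htQ'⟩ := (hF j tau'.1).1 tau'.2
  simp only [Matrix.add_apply, Matrix.mul_apply, Matrix.submatrix_apply, Matrix.one_apply,
    bMat, coneH, Matrix.of_apply, id_eq, he']
  by_cases hi : i0 ∈ tau.1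
  · -- apex in `tau`: only the second (homotopy-after-boundary) term contributes
    have h1 : (∑ rho : (F (j + 1) : Type _),
        (∑ a ∈ rho.1, if rho.1.erase a = tau'.1
            then (-1 : k) ^ (rho.1.filter fun x => x < a).card else 0) *
          (if i0 ∉ tau.1 ∧ rho.1 = insert i0 tau.1
            then (-1 : k) ^ (tau.1.filter fun x => x < i0).card else 0)) = 0 := by
      apply Finset.sum_eq_zero
      intro rho _
      rw [if_neg (fun hc => hc.1 hi), mul_zero]
    rw [h1, zero_add]
    -- second sum: single contribution from `rho = tau.erase i0`
    have hmem : tau.1.erase i0 ∈ F (j - 1) := by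
      refine (hF _ _).2 ⟨?_, hQe _ htQ⟩
      have := Finset.card_erase_add_one hi
      omega
    rw [Fintype.sum_eq_single (⟨tau.1.erase i0, hmem⟩ : (F (j - 1) : Type _))]
    · have hins : insert i0 (tau.1.erase i0) = tau.1 := Finset.insert_erase hi
      have hsum : (∑ a ∈ tau.1, if tau.1.erase a = tau.1.erase i0
          then (-1 : k) ^ (tau.1.filter fun x => x < a).card else 0)
            = (-1 : k) ^ (tau.1.filter fun x => x < i0).card := by
        rw [Finset.sum_eq_single i0]
        · rw [if_pos rfl]
        · intro a ha hne
          rw [if_neg]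
          intro hc
          have hmm : i0 ∈ tau.1.erase a := Finset.mem_erase.2 ⟨fun h => hne h.symm, hi⟩
          rw [hc] at hmm
          exact Finset.notMem_erase i0 tau.1 hmm
        · intro h; exact absurd hi h
      simp only [hsum, Finset.notMem_erase, not_false_eq_true, true_and, hins]
      have hfe : ((tau.1.erase i0).filter fun x => x < i0) = tau.1.filter fun x => x < i0 := by
        rw [Finset.filter_erase, Finset.erase_eq_of_notMem (by simp)]
      by_cases heq : tau'.1 = tau.1
      · rw [if_pos heq, if_pos (Subtype.ext heq), hfe, ← pow_add]
        exact Even.neg_one_pow ⟨_, rfl⟩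
      · rw [if_neg heq, if_neg (fun hc => heq (congrArg Subtype.val hc)), zero_mul]
    · intro rho hne
      by_cases hP : i0 ∉ rho.1 ∧ tau'.1 = insert i0 rho.1
      · rw [if_pos hP]
        have : (∑ a ∈ tau.1, if tau.1.erase a = rho.1
            then (-1 : k) ^ (tau.1.filter fun x => x < a).card else 0) = 0 := by
          apply Finset.sum_eq_zero
          intro a ha
          rw [if_neg]
          intro hc
          apply hne
          apply Subtype.ext
          have hai : a = i0 := by
            by_contra h2
            exact hP.1 (hc ▸ Finset.mem_erase.2 ⟨fun h3 => h2 h3.symm, hi⟩)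
          rw [← hc, hai]
        rw [this, mul_zero]
      · rw [if_neg hP, zero_mul]
  · -- apex not in `tau`: the diagonal term comes from the first sum, cross terms cancel
    have hmem1 : insert i0 tau.1 ∈ F (j + 1) := by
      refine (hF _ _).2 ⟨?_, hQi _ htQ⟩
      rw [Finset.card_insert_of_notMem hi]
      push_cast
      omega
    rw [Fintype.sum_eq_single (⟨insert i0 tau.1, hmem1⟩ : (F (j + 1) : Type _))
      (by
        intro rho hne
        rw [if_neg, mul_zero]
        rintro ⟨-, hc⟩
        exact hne (Subtype.ext hc))]
    rw [if_pos ⟨hi, rfl⟩]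
    dsimp only
    rw [Finset.sum_insert hi]
    have hei : (insert i0 tau.1).erase i0 = tau.1 := Finset.erase_insert hi
    have hfi : ((insert i0 tau.1).filter fun x => x < i0) = tau.1.filter fun x => x < i0 := by
      rw [Finset.filter_insert, if_neg (lt_irrefl i0)]
    -- second (homotopy-after-boundary) sum, rewritten as a sum over `a ∈ tau`
    have h2 : (∑ rho : (F (j - 1) : Type _),
        (if i0 ∉ rho.1 ∧ tau'.1 = insert i0 rho.1
          then (-1 : k) ^ (rho.1.filter fun x => x < i0).card else 0) *
        (∑ a ∈ tau.1, if tau.1.erase a = rho.1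
          then (-1 : k) ^ (tau.1.filter fun x => x < a).card else 0))
        = ∑ a ∈ tau.1, (if tau.1.erase a ∈ F (j - 1) then
            (if i0 ∉ tau.1.erase a ∧ tau'.1 = insert i0 (tau.1.erase a)
              then (-1 : k) ^ ((tau.1.erase a).filter fun x => x < i0).card else 0) *
            (-1 : k) ^ (tau.1.filter fun x => x < a).card
          else 0) := by
      have hrw : ∀ rho : (F (j - 1) : Type _),
          (if i0 ∉ rho.1 ∧ tau'.1 = insert i0 rho.1
            then (-1 : k) ^ (rho.1.filter fun x => x < i0).card else 0) *
          (∑ a ∈ tau.1, if tau.1.erase a = rho.1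
            then (-1 : k) ^ (tau.1.filter fun x => x < a).card else 0)
          = ∑ a ∈ tau.1, (if tau.1.erase a = rho.1 then
              (if i0 ∉ rho.1 ∧ tau'.1 = insert i0 rho.1
                then (-1 : k) ^ (rho.1.filter fun x => x < i0).card else 0) *
              (-1 : k) ^ (tau.1.filter fun x => x < a).card else 0) := by
        intro rho
        rw [Finset.mul_sum]
        congr 1
        funext a
        rw [mul_ite, mul_zero]
      simp_rw [hrw]
      rw [Finset.sum_comm]
      congr 1
      funext a
      exact sum_subtype_ite (F (j - 1)) (tau.1.erase a)
        (fun x => (if i0 ∉ x ∧ tau'.1 = insert i0 x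
          then (-1 : k) ^ (x.filter fun y => y < i0).card else 0) *
          (-1 : k) ^ (tau.1.filter fun y => y < a).card)
    rw [h2]
    rw [hei, add_mul, Finset.sum_mul, add_assoc, ← Finset.sum_add_distrib]
    have hdiag : (if tau.1 = tau'.1 then (-1 : k) ^ ((insert i0 tau.1).filter fun x => x < i0).card
          else 0) * (-1 : k) ^ (tau.1.filter fun x => x < i0).card
        = if tau' = tau then 1 else 0 := by
      rw [hfi]
      by_cases heq : tau.1 = tau'.1
      · rw [if_pos heq, if_pos (Subtype.ext heq.symm), ← pow_add]
        exact Even.neg_one_pow ⟨_, rfl⟩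
      · rw [if_neg heq, if_neg (fun hc => heq (congrArg Subtype.val hc).symm), zero_mul]
    have hcross : (∑ a ∈ tau.1,
        ((if (insert i0 tau.1).erase a = tau'.1
            then (-1 : k) ^ ((insert i0 tau.1).filter fun x => x < a).card else 0) *
          (-1 : k) ^ (tau.1.filter fun x => x < i0).card
        + (if tau.1.erase a ∈ F (j - 1) then
            (if i0 ∉ tau.1.erase a ∧ tau'.1 = insert i0 (tau.1.erase a)
              then (-1 : k) ^ ((tau.1.erase a).filter fun x => x < i0).card else 0) *
            (-1 : k) ^ (tau.1.filter fun x => x < a).card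
          else 0))) = 0 := by
      apply Finset.sum_eq_zero
      intro a ha
      have hane : a ≠ i0 := fun h => hi (h ▸ ha)
      have herw : (insert i0 tau.1).erase a = insert i0 (tau.1.erase a) :=
        Finset.erase_insert_of_ne (Ne.symm hane)
      have hia : i0 ∉ tau.1.erase a := fun h => hi (Finset.mem_of_mem_erase h)
      by_cases hcond : insert i0 (tau.1.erase a) = tau'.1
      · have hQea : Q (tau.1.erase a) := by
          have := hQe _ htQ'
          rwa [← hcond, Finset.erase_insert hia] at this
        have hmem2 : tau.1.erase a ∈ F (j - 1) := by
          refine (hF _ _).2 ⟨?_, hQea⟩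
          have := Finset.card_erase_add_one ha
          omega
        rw [herw, if_pos hcond, if_pos hmem2, if_pos ⟨hia, hcond.symm⟩]
        exact sign_cancel tau.1 a i0 ha hi
      · rw [herw, if_neg hcond, zero_mul, zero_add]
        split
        · rw [if_neg (fun hc => hcond hc.2.symm), zero_mul]
        · rfl
    rw [hcross, add_zero, hdiag]

/-- If the strand is a cone with apex `i0`, then all its homology vanishes. -/
lemma cone_homDimAt_zero (i0 : V) (Q : Finset V → Prop)
    (hQi : ∀ tau, Q tau → Q (insert i0 tau)) (hQe : ∀ tau, Q tau → Q (tau.erase i0))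
    (F : ℤ → Finset (Finset V)) (hF : ∀ j tau, tau ∈ F j ↔ (tau.card : ℤ) = j ∧ Q tau)
    (j : ℤ) : homDimAt k F j = 0 := by
  classical
  have hEq : F (j + 1 - 1) = F j := by rw [add_sub_cancel_right]
  let e : (F (j + 1 - 1) : Type _) ≃ (F j : Type _) :=
    Equiv.subtypeEquivRight (fun x => by rw [hEq])
  have he : ∀ x, ((e x : Finset V)) = (x : Finset V) := fun x => rfl
  have hkey := coneH_key (k := k) i0 Q hQi hQe F hF j e he
  have hcard : (F j).card ≤ (bMat k F j).rank + (bMat k F (j + 1)).rank := by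
    have h1 : ((1 : Matrix (F j : Type _) (F j : Type _) k)).rank = (F j).card := by
      rw [Matrix.rank_one, Fintype.card_coe]
    calc (F j).card
        = ((1 : Matrix (F j : Type _) (F j : Type _) k)).rank := h1.symm
      _ = ((bMat k F (j + 1)).submatrix e.symm id * coneH k i0 (F (j + 1)) (F j)
            + coneH k i0 (F j) (F (j - 1)) * bMat k F j).rank := by rw [hkey]
      _ ≤ ((bMat k F (j + 1)).submatrix e.symm id * coneH k i0 (F (j + 1)) (F j)).rank
            + (coneH k i0 (F j) (F (j - 1)) * bMat k F j).rank := matrixRank_add_le _ _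
      _ ≤ ((bMat k F (j + 1)).submatrix e.symm id).rank + (bMat k F j).rank := by
          gcongr
          · exact Matrix.rank_mul_le_left _ _
          · exact Matrix.rank_mul_le_right _ _
      _ ≤ (bMat k F (j + 1)).rank + (bMat k F j).rank := by
          gcongr
          exact matrixRank_submatrix_le _ _
      _ = (bMat k F j).rank + (bMat k F (j + 1)).rank := add_comm _ _
  unfold homDimAt
  omega

end ConeAux

/-- for a monomial ideal `I = ⟨m_1, …, m_t⟩` in `S = k[x_1, …, x_n]`,
with `a_τ := deg lcm{m_i : i ∈ τ} ∈ ℤⁿ` for `τ ⊆ {1,…,t}`, the graded Betti number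
`β_{r,u}(S/I)` vanishes for every fine degree `u ∈ ℤⁿ` that is not of the form `a_τ`
for some `τ ⊆ {1,…,t}`. -/
theorem betti_vanishing_outside_lcm_degrees (k : Type*) [Field k] {n t : ℕ}
    (m : Fin t → Fin n → ℕ) (u : Fin n → ℤ)
    (hu : ∀ τ : Finset (Fin t), u ≠ fun i => ((τ.sup fun l => m l i : ℕ) : ℤ)) :
    ∀ r : ℕ, bettiGen k m r u = 0 := by
  intro r
  unfold bettiGen
  by_cases hneg : ∃ i, u i < 0
  · obtain ⟨i1, hi1⟩ := hneg
    have hF : ∀ j : ℤ, kFacesGen m u j = ∅ := by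
      intro j
      ext tau
      simp only [kFacesGen, Finset.mem_filter, Finset.mem_univ, true_and,
        Finset.notMem_empty, iff_false, not_and]
      intro _ h2
      exfalso
      have := h2 i1
      split at this <;> omega
    unfold homDimAt
    have h1 : (kFacesGen m u (r : ℤ)).card = 0 := by rw [hF]; rfl
    omega
  · push_neg at hneg
    set T : Finset (Fin t) := Finset.univ.filter fun l => ∀ i, (m l i : ℤ) ≤ u i with hT
    have hvle : ∀ i, ((T.sup fun l => m l i : ℕ) : ℤ) ≤ u i := by
      intro i
      have h1 : (T.sup fun l => m l i) ≤ (u i).toNat := by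
        apply Finset.sup_le
        intro l hl
        have hml : ∀ i', (m l i' : ℤ) ≤ u i' := by
          simpa [hT] using hl
        have h3 := hml i
        have h4 := hneg i
        omega
      have h4 := hneg i
      omega
    obtain ⟨i0, hi0⟩ : ∃ i0, ((T.sup fun l => m l i0 : ℕ) : ℤ) < u i0 := by
      by_contra h
      push_neg at h
      exact hu T (funext fun i => le_antisymm (h i) (hvle i))
    have hTm : ∀ l ∈ T, (m l i0 : ℤ) ≤ u i0 - 1 := by
      intro l hl
      have : (m l i0 : ℤ) ≤ ((T.sup fun l => m l i0 : ℕ) : ℤ) := by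
        exact_mod_cast Nat.cast_le.2 (Finset.le_sup (f := fun l => m l i0) hl)
      omega
    have hu0 : 1 ≤ u i0 := by
      have : (0 : ℤ) ≤ ((T.sup fun l => m l i0 : ℕ) : ℤ) := Int.natCast_nonneg _
      omega
    set Q : Finset (Fin n) → Prop := fun tau =>
      (∀ i, (if i ∈ tau then 1 else 0 : ℤ) ≤ u i) ∧
        ¬ ∃ l : Fin t, ∀ i, (m l i : ℤ) ≤ u i - (if i ∈ tau then 1 else 0) with hQ
    have hmemT : ∀ (tau : Finset (Fin n)) (l : Fin t),
        (∀ i, (m l i : ℤ) ≤ u i - (if i ∈ tau then 1 else 0)) → l ∈ T := by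
      intro tau l hl
      simp only [hT, Finset.mem_filter, Finset.mem_univ, true_and]
      intro i
      have := hl i
      split at this <;> omega
    have hQi : ∀ tau, Q tau → Q (insert i0 tau) := by
      intro tau ⟨h1, h2⟩
      constructor
      · intro i
        by_cases hii : i = i0
        · subst hii; simp [hu0]
        · have := h1 i
          simp only [Finset.mem_insert]
          split
          · rename_i hmem
            rcases hmem with h | h
            · exact absurd h hii
            · simpa [h] using this
          · split at this <;> omega
      · rintro ⟨l, hl⟩
        apply h2
        refine ⟨l, fun i => ?_⟩
        have hlT : l ∈ T := by
          apply hmemT (insert i0 tau) l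
          exact hl
        by_cases hii : i = i0
        · have h5 := hTm l hlT
          rw [hii]
          split <;> omega
        · have := hl i
          simp only [Finset.mem_insert] at this
          by_cases hmem : i ∈ tau
          · simpa [hmem] using (by simpa [hmem, hii] using this)
          · simp only [hmem, if_false]
            simpa [hii, hmem] using this
    have hQe : ∀ tau, Q tau → Q (tau.erase i0) := by
      intro tau ⟨h1, h2⟩
      constructor
      · intro i
        have h7 := h1 i
        by_cases hmem : i ∈ tau.erase i0
        · rw [if_pos hmem]
          rw [if_pos (Finset.mem_of_mem_erase hmem)] at h7
          exact h7
        · rw [if_neg hmem]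
          split at h7 <;> omega
      · rintro ⟨l, hl⟩
        apply h2
        refine ⟨l, fun i => ?_⟩
        have hlT : l ∈ T := by
          apply hmemT (tau.erase i0) l
          exact hl
        by_cases hii : i = i0
        · have h5 := hTm l hlT
          rw [hii]
          split <;> omega
        · have := hl i
          simpa [Finset.mem_erase, hii] using this
    have hFiff : ∀ (j : ℤ) (tau : Finset (Fin n)),
        tau ∈ kFacesGen m u j ↔ (tau.card : ℤ) = j ∧ Q tau := by
      intro j tau
      unfold kFacesGen
      rw [Finset.mem_filter]
      constructor
      · rintro ⟨-, hc, h1, h2⟩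
        exact ⟨hc, h1, h2⟩
      · rintro ⟨hc, h1, h2⟩
        exact ⟨Finset.mem_univ _, hc, h1, h2⟩
    have hinsEq : ∀ (d : DecidableEq (Fin n)) (tau : Finset (Fin n)),
        @insert _ _ (@Finset.instInsert _ d) i0 tau = insert i0 tau := by
      intro d tau
      rw [Subsingleton.elim d (instDecidableEqFin n)]
    have hersEq : ∀ (d : DecidableEq (Fin n)) (tau : Finset (Fin n)),
        @Finset.erase _ d tau i0 = tau.erase i0 := by
      intro d tau
      rw [Subsingleton.elim d (instDecidableEqFin n)]
    refine cone_homDimAt_zero (k := k) (V := Fin n) i0 Q ?_ ?_ (kFacesGen m u) hFiff (r : ℤ)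
    · intro tau h
      convert hQi tau h using 3
    · intro tau h
      convert hQe tau h using 2
end
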